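/- Let (A,φ) and (B,ψ) be PCAs over Set. A functor F: Asm(A,φ) → Asm(B,ψ) is naturally isomorphic to Asm(f) for some applicative morphism f: (A,φ) → (B,ψ) if and only if: F preserves finite limits and regular epimorphisms; Γ_B ∘ F is naturally isomorphic to Γ_A; and F ∘ ∇_A is naturally isomorphic to ∇_B. -/

import Mathlib

open CategoryTheory

namespace PcaPaper

/-- A partial binary application on `A`. -/
abbrev PApp (A : Type) := A → A → Option A

variable {A B C : Type}

/-- Definedness of the application of inhabited subsets. -/
def SubDef (app : PApp A) (U V : Set A) : Prop :=
  ∀ a ∈ U, ∀ b ∈ V, (app a b).isSome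

/-- Application of subsets. -/
def SubApp (app : PApp A) (U V : Set A) : Set A :=
  {c | ∃ a ∈ U, ∃ b ∈ V, app a b = some c}

/-- Terms with `n` variables, built from variables by application. -/
inductive Term (n : ℕ) : Type
  | var : Fin n → Term n
  | op : Term n → Term n → Term n

/-- Evaluation of a term at a vector of elements, as a partial function. -/
def Term.eval (app : PApp A) : {n : ℕ} → Term n → (Fin n → A) → Option A
  | _, .var i, ρ => some (ρ i)
  | _, .op s t, ρ => (Term.eval app s ρ).bind fun x => (Term.eval app t ρ).bind fun y => app x y

/-- Evaluation of a term at a vector of subsets. -/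
def Term.subEval (app : PApp A) : {n : ℕ} → Term n → (Fin n → Set A) → Set A
  | _, .var i, ρ => ρ i
  | _, .op s t, ρ => SubApp app (Term.subEval app s ρ) (Term.subEval app t ρ)

/-- Definedness of the evaluation of a term at a vector of subsets. -/
def Term.subDef (app : PApp A) : {n : ℕ} → Term n → (Fin n → Set A) → Prop
  | _, .var _, _ => True
  | _, .op s t, ρ => Term.subDef app s ρ ∧ Term.subDef app t ρ ∧
      SubDef app (Term.subEval app s ρ) (Term.subEval app t ρ)

/-- `r · a 0 · … · a (k-1)`, associated to the left. -/
def appVec (app : PApp A) (r : A) : (k : ℕ) → (Fin k → A) → Option A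
  | 0, _ => some r
  | k + 1, a => (appVec app r k fun i => a i.castSucc).bind fun s => app s (a (Fin.last k))

/-- `U` realizes `λ x₀ … xₙ. t`. -/
def Realizes (app : PApp A) (U : Set A) {n : ℕ} (t : Term (n + 1)) : Prop :=
  ∀ r ∈ U, ∀ a : Fin (n + 1) → A,
    (appVec app r n fun i => a i.castSucc).isSome ∧
    ∀ b, Term.eval app t a = some b → appVec app r (n + 1) a = some b

/-- A filter of inhabited subsets on a partial applicative structure. -/
structure IsPcaFilter (app : PApp A) (φ : Set (Set A)) : Prop where
  nonempty : ∀ U ∈ φ, U.Nonempty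
  upward : ∀ U ∈ φ, ∀ V : Set A, U ⊆ V → V ∈ φ
  appClosed : ∀ U ∈ φ, ∀ V ∈ φ, SubDef app U V → SubApp app U V ∈ φ

/-- Combinatorial completeness of a set of subsets. -/
def CombComplete (app : PApp A) (G : Set (Set A)) : Prop :=
  ∀ (n : ℕ) (t : Term (n + 1)), ∃ U ∈ G, Realizes app U t

/-- The least filter containing `G`. -/
def genFilter (app : PApp A) (G : Set (Set A)) : Set (Set A) :=
  ⋂₀ {ψ | IsPcaFilter app ψ ∧ G ⊆ ψ}

/-- A (relative) PCA over the base category `Set`: a nonempty set with a partial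
binary application and a combinatorially complete filter of inhabited subsets. -/
structure PCA (A : Type) where
  app : PApp A
  nonemptyCarrier : Nonempty A
  filt : Set (Set A)
  isFilter : IsPcaFilter app filt
  complete : CombComplete app filt

/- ### Helper lemmas -/

lemma isSome_bind_left {α β : Type} {o : Option α} {f : α → Option β}
    (h : (o.bind f).isSome) : o.isSome := by
  cases o <;> simp_all

lemma appVec_two_pre (app : PApp A) (r u v x : A) :
    (appVec app r 2 fun i => (![u, v, x] : Fin 3 → A) i.castSucc)
      = (app r u).bind fun s => app s v := rfl

lemma appVec_three_cons (app : PApp A) (r u v x : A) :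
    appVec app r (2 + 1) ![u, v, x]
      = ((app r u).bind fun s => app s v).bind fun s => app s x := rfl

lemma eval_comp_term (app : PApp A) (u v x : A) :
    Term.eval app (Term.op (.var 1) (.op (.var 0) (.var 2))) ![u, v, x]
      = (app u x).bind fun y => app v y := by
  simp [Term.eval]

lemma eval_app2_term (app : PApp A) (u v x : A) :
    Term.eval app (Term.op (.op (.var 0) (.var 1)) (.var 2)) ![u, v, x]
      = (app u v).bind fun d => app d x := by
  simp [Term.eval]

lemma filt_nonempty (P : PCA A) : ∃ U, U ∈ P.filt := by
  obtain ⟨U, hU, -⟩ := P.complete 0 (.var 0)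
  exact ⟨U, hU⟩

lemma univ_mem_filt (P : PCA A) : (Set.univ : Set A) ∈ P.filt := by
  obtain ⟨U, hU⟩ := filt_nonempty P
  exact P.isFilter.upward U hU _ (Set.subset_univ U)

lemma exists_ireal (P : PCA A) :
    ∃ U ∈ P.filt, ∀ r ∈ U, ∀ a : A, P.app r a = some a := by
  obtain ⟨U, hU, hreal⟩ := P.complete 0 (.var 0)
  refine ⟨U, hU, fun r hr a => ?_⟩
  have h := (hreal r hr fun _ => a).2 a (by simp [Term.eval])
  simpa [appVec] using h

lemma realizes3_chain (P : PCA A) {T : Set A} {t : Term (2 + 1)}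
    (hreal : Realizes P.app T t) {r : A} (hr : r ∈ T) (u v : A) :
    ∃ s w, P.app r u = some s ∧ P.app s v = some w := by
  have h1 : ((P.app r u).bind fun s => P.app s v).isSome := by
    have h := (hreal r hr ![u, v, v]).1
    rwa [appVec_two_pre] at h
  cases hru : P.app r u with
  | none => rw [hru] at h1; simp at h1
  | some s =>
    rw [hru] at h1
    simp only [Option.bind_some] at h1
    obtain ⟨w, hw⟩ := Option.isSome_iff_exists.mp h1
    exact ⟨s, w, rfl, hw⟩

lemma exists_tracker3 (P : PCA A) (t : Term (2 + 1)) {U V : Set A}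
    (hU : U ∈ P.filt) (hV : V ∈ P.filt) :
    ∃ W ∈ P.filt, ∀ w ∈ W, ∃ u ∈ U, ∃ v ∈ V,
      ∀ x c : A, Term.eval P.app t ![u, v, x] = some c → P.app w x = some c := by
  obtain ⟨T, hT, hreal⟩ := P.complete 2 t
  have hdef1 : SubDef P.app T U := by
    intro r hr u _
    obtain ⟨s, w, hs, -⟩ := realizes3_chain P hreal hr u u
    simp [hs]
  have hTU := P.isFilter.appClosed T hT U hU hdef1
  have hdef2 : SubDef P.app (SubApp P.app T U) V := by
    rintro s ⟨r, hr, u, hu, hru⟩ v _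
    obtain ⟨s', w, hs', hw⟩ := realizes3_chain P hreal hr u v
    rw [hru] at hs'
    injection hs' with h
    subst h
    simp [hw]
  refine ⟨SubApp P.app (SubApp P.app T U) V,
    P.isFilter.appClosed _ hTU V hV hdef2, ?_⟩
  rintro w ⟨s, ⟨r, hr, u, hu, hru⟩, v, hv, hsv⟩
  refine ⟨u, hu, v, hv, fun x c hc => ?_⟩
  have h2 : appVec P.app r (2 + 1) ![u, v, x] = some c := (hreal r hr ![u, v, x]).2 c hc
  rw [appVec_three_cons, hru] at h2
  simp only [Option.bind_some] at h2
  rw [hsv] at h2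
  simpa using h2

/- ### Assemblies -/

/-- An assembly over a PCA `(A, φ)`. -/
structure Asm {A : Type} (P : PCA A) : Type 1 where
  carrier : Type
  E : carrier → A → Prop
  total : ∀ x, ∃ a, E x a

/-- `U` tracks the function `f` between (the carriers of) two assemblies. -/
def Tracks (P : PCA A) {X Y : Asm P} (U : Set A) (f : X.carrier → Y.carrier) : Prop :=
  ∀ x a r, X.E x a → r ∈ U → ∃ b, P.app r a = some b ∧ Y.E (f x) b

/-- The category of assemblies over a PCA. -/
instance asmCategory (P : PCA A) : Category (Asm P) where
  Hom X Y := {f : X.carrier → Y.carrier // ∃ U ∈ P.filt, Tracks P U f}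
  id X := ⟨fun x => x, by
    obtain ⟨U, hU, hI⟩ := exists_ireal P
    exact ⟨U, hU, fun x a r hx hr => ⟨a, hI r hr a, hx⟩⟩⟩
  comp {X Y Z} f g := ⟨fun x => g.1 (f.1 x), by
    obtain ⟨U, hU, hf⟩ := f.2
    obtain ⟨V, hV, hg⟩ := g.2
    obtain ⟨W, hW, hkey⟩ := exists_tracker3 P
      (Term.op (.var 1) (.op (.var 0) (.var 2))) hU hV
    refine ⟨W, hW, fun x a w hx hw => ?_⟩
    obtain ⟨u, hu, v, hv, key⟩ := hkey w hw
    obtain ⟨b, hb, hYb⟩ := hf x a u hx hu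
    obtain ⟨c, hc, hZc⟩ := hg (f.1 x) b v hYb hv
    refine ⟨c, key a c ?_, hZc⟩
    rw [eval_comp_term, hb]
    simpa using hc⟩
  id_comp f := Subtype.ext rfl
  comp_id f := Subtype.ext rfl
  assoc f g h := Subtype.ext rfl

/-- The global-sections-like functor `Γ : Asm(A,φ) ⥤ Set`. -/
def Gam (P : PCA A) : Asm P ⥤ Type where
  obj X := X.carrier
  map f := TypeCat.ofHom f.1
  map_id _ := rfl
  map_comp _ _ := rfl

/-- The constant-object assembly `∇ Y`. -/
def nablaObj (P : PCA A) (Y : Type) : Asm P where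
  carrier := Y
  E := fun _ _ => True
  total := fun _ => P.nonemptyCarrier.elim fun a => ⟨a, trivial⟩

/-- The functor `∇ : Set ⥤ Asm(A,φ)`. -/
def Nab (P : PCA A) : Type ⥤ Asm P where
  obj Y := nablaObj P Y
  map {Y Z} f := ⟨f, by
    obtain ⟨U, hU, hI⟩ := exists_ireal P
    exact ⟨U, hU, fun y a r _ hr => ⟨a, hI r hr a, trivial⟩⟩⟩
  map_id _ := Subtype.ext rfl
  map_comp _ _ := Subtype.ext rfl

/- ### Applicative morphisms -/

/-- The image of a subset under a relation. -/
def relImage (f : A → B → Prop) (V : Set A) : Set B :=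
  {b | ∃ a ∈ V, f a b}

/-- `U` tracks the relation `f` as an applicative (pre)morphism. -/
def Tracks₂ (appA : PApp A) (appB : PApp B) (U : Set B) (f : A → B → Prop) : Prop :=
  ∀ a a' c, appA a a' = some c → ∀ b b', f a b → f a' b' → ∀ r ∈ U,
    ∃ d e, appB r b = some d ∧ appB d b' = some e ∧ f c e

/-- `f ⊆ A × B` is an applicative morphism `(A,φ) → (B,ψ)`. -/
structure IsAppMor (appA : PApp A) (φ : Set (Set A)) (appB : PApp B) (ψ : Set (Set B))
    (f : A → B → Prop) : Prop where
  total : ∀ a, ∃ b, f a b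
  tracked : ∃ U ∈ ψ, Tracks₂ appA appB U f
  image : ∀ V ∈ φ, relImage f V ∈ ψ

/-- The preorder `f ≤ f'` on relations `A × B`, relative to `(B,ψ)`. -/
def RelLe (appB : PApp B) (ψ : Set (Set B)) (f f' : A → B → Prop) : Prop :=
  ∃ U ∈ ψ, ∀ a b, f a b → ∀ r ∈ U, ∃ c, appB r b = some c ∧ f' a c

/-- Relational composition: `(RelComp g f) a c ↔ ∃ b, f a b ∧ g b c`. -/
def RelComp (g : B → C → Prop) (f : A → B → Prop) : A → C → Prop :=
  fun a c => ∃ b, f a b ∧ g b c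

/-- The diagonal (identity) relation `δ_A`. -/
def relId (A : Type) : A → A → Prop := fun a b => a = b

/- ### The functor Asm(f) induced by an applicative morphism -/

/-- The action of an applicative morphism on an assembly. -/
def asmObj (P : PCA A) (Q : PCA B) (f : A → B → Prop) (htot : ∀ a, ∃ b, f a b)
    (X : Asm P) : Asm Q where
  carrier := X.carrier
  E := fun x b => ∃ a, X.E x a ∧ f a b
  total := fun x => by
    obtain ⟨a, ha⟩ := X.total x
    obtain ⟨b, hb⟩ := htot a
    exact ⟨b, a, ha, hb⟩

lemma tracks_asmMap {P : PCA A} {Q : PCA B} {f : A → B → Prop}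
    (hf : IsAppMor P.app P.filt Q.app Q.filt f) {X Y : Asm P}
    (g : X.carrier → Y.carrier) (hg : ∃ U ∈ P.filt, Tracks P U g) :
    ∃ W ∈ Q.filt,
      Tracks Q (X := asmObj P Q f hf.total X) (Y := asmObj P Q f hf.total Y) W g := by
  obtain ⟨U, hU, hgU⟩ := hg
  obtain ⟨T, hT, hfT⟩ := hf.tracked
  have hfU : relImage f U ∈ Q.filt := hf.image U hU
  obtain ⟨W, hW, hkey⟩ := exists_tracker3 Q
    (Term.op (.op (.var 0) (.var 1)) (.var 2)) hT hfU
  refine ⟨W, hW, ?_⟩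
  rintro x b w ⟨a, hxa, hab⟩ hw
  obtain ⟨v, hv, y, hy, key⟩ := hkey w hw
  obtain ⟨u, hu, huy⟩ := hy
  obtain ⟨a', ha', hEa'⟩ := hgU x a u hxa hu
  obtain ⟨d, e, hd, he, hfe⟩ := hfT u a a' ha' y b huy hab v hv
  refine ⟨e, key b e ?_, a', hEa', hfe⟩
  rw [eval_app2_term, hd]
  simpa using he

/-- The functor `Asm(f) : Asm(A,φ) ⥤ Asm(B,ψ)` induced by an applicative morphism. -/
def asmFunctor {P : PCA A} {Q : PCA B} {f : A → B → Prop}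
    (hf : IsAppMor P.app P.filt Q.app Q.filt f) : Asm P ⥤ Asm Q where
  obj X := asmObj P Q f hf.total X
  map {X Y} g := ⟨g.1, tracks_asmMap hf g.1 g.2⟩
  map_id _ := Subtype.ext rfl
  map_comp _ _ := Subtype.ext rfl
/- ### Products of PASs -/

/-- Coordinatewise partial application on `A × B`. -/
def prodApp (appA : PApp A) (appB : PApp B) : PApp (A × B) := fun p q =>
  (appA p.1 q.1).bind fun x => (appB p.2 q.2).bind fun y => some (x, y)

/-- The set `φ × ψ` of rectangles `U ×ˢ V` with `U ∈ φ` and `V ∈ ψ`. -/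
def prodFiltSet (φ : Set (Set A)) (ψ : Set (Set B)) : Set (Set (A × B)) :=
  {W | ∃ U ∈ φ, ∃ V ∈ ψ, W = U ×ˢ V}

/-- The filter `⟨φ × ψ⟩` of the pseudocoproduct of two PCAs. -/
def prodFilt (P : PCA A) (Q : PCA B) : Set (Set (A × B)) :=
  genFilter (prodApp P.app Q.app) (prodFiltSet P.filt Q.filt)

/- ### Quasi-surjectivity and computational density -/

/-- A quasi-surjective applicative morphism. -/
def QuasiSurjective (P : PCA A) (Q : PCA B) (f : A → B → Prop) : Prop :=
  ∃ N ∈ Q.filt, ∀ U ∈ Q.filt, ∃ V ∈ P.filt,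
    ∀ n ∈ N, ∀ b ∈ relImage f V, ∃ c, Q.app n b = some c ∧ c ∈ U

/-- A computationally dense applicative morphism. -/
def CompDense (P : PCA A) (Q : PCA B) (f : A → B → Prop) : Prop :=
  ∃ M ∈ Q.filt, ∀ U ∈ Q.filt, ∃ V ∈ P.filt,
    (∀ r ∈ V, ∀ a : A, (P.app r a).isSome) ∧
    (∀ r ∈ V, ∀ a a', P.app r a = some a' →
      (∀ u ∈ U, ∀ b, f a b → (Q.app u b).isSome) →
      ∀ m ∈ M, ∀ b', f a' b' →
        ∃ c, Q.app m b' = some c ∧ ∃ u ∈ U, ∃ b'', f a b'' ∧ Q.app u b'' = some c)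

/- ### Slicing: fiberwise filters over an assembly -/

/-- Fiberwise definedness of the application of two subsets of `I × A`. -/
def fibSubDef (app : PApp A) {I : Type} (U V : Set (I × A)) : Prop :=
  ∀ i r s, (i, r) ∈ U → (i, s) ∈ V → (app r s).isSome

/-- Fiberwise application of two subsets of `I × A`. -/
def fibSubApp (app : PApp A) {I : Type} (U V : Set (I × A)) : Set (I × A) :=
  {p | ∃ r s, (p.1, r) ∈ U ∧ (p.1, s) ∈ V ∧ app r s = some p.2}

/-- A fiberwise filter over `I`. -/
structure IsFibFilter (app : PApp A) (I : Type) (Ψ : Set (Set (I × A))) : Prop where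
  inhab : ∀ U ∈ Ψ, ∀ i : I, ∃ a, (i, a) ∈ U
  upward : ∀ U ∈ Ψ, ∀ V : Set (I × A), U ⊆ V → V ∈ Ψ
  appClosed : ∀ U ∈ Ψ, ∀ V ∈ Ψ, fibSubDef app U V → fibSubApp app U V ∈ Ψ

/-- The filter `φ_I` of the slice PCA over an assembly `I`: the least fiberwise filter
containing `E_I` and all sets `|I| × V` for `V ∈ φ`. -/
def sliceFilt (P : PCA A) (I : Asm P) : Set (Set (I.carrier × A)) :=
  ⋂₀ {Ψ | IsFibFilter P.app I.carrier Ψ ∧ {p : I.carrier × A | I.E p.1 p.2} ∈ Ψ ∧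
      ∀ V ∈ P.filt, {p : I.carrier × A | p.2 ∈ V} ∈ Ψ}

lemma sliceFilt_upward {P : PCA A} {I : Asm P} {U V : Set (I.carrier × A)}
    (hU : U ∈ sliceFilt P I) (hUV : U ⊆ V) : V ∈ sliceFilt P I := by
  rw [sliceFilt, Set.mem_sInter] at hU ⊢
  intro Ψ hΨ
  exact hΨ.1.upward U (hU Ψ hΨ) V hUV

lemma sliceFilt_appClosed {P : PCA A} {I : Asm P} {U V : Set (I.carrier × A)}
    (hU : U ∈ sliceFilt P I) (hV : V ∈ sliceFilt P I) (hdef : fibSubDef P.app U V) :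
    fibSubApp P.app U V ∈ sliceFilt P I := by
  rw [sliceFilt, Set.mem_sInter] at hU hV ⊢
  intro Ψ hΨ
  exact hΨ.1.appClosed U (hU Ψ hΨ) V (hV Ψ hΨ) hdef

lemma base_mem_sliceFilt {P : PCA A} {I : Asm P} {V : Set A} (hV : V ∈ P.filt) :
    {p : I.carrier × A | p.2 ∈ V} ∈ sliceFilt P I := by
  rw [sliceFilt, Set.mem_sInter]
  intro Ψ hΨ
  exact hΨ.2.2 V hV

lemma EI_mem_sliceFilt (P : PCA A) (I : Asm P) :
    {p : I.carrier × A | I.E p.1 p.2} ∈ sliceFilt P I := by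
  rw [sliceFilt, Set.mem_sInter]
  intro Ψ hΨ
  exact hΨ.2.1

lemma exists_fib_tracker3 (P : PCA A) (I : Asm P) (t : Term (2 + 1))
    {U V : Set (I.carrier × A)} (hU : U ∈ sliceFilt P I) (hV : V ∈ sliceFilt P I) :
    ∃ W ∈ sliceFilt P I, ∀ i w, (i, w) ∈ W → ∃ u v, (i, u) ∈ U ∧ (i, v) ∈ V ∧
      ∀ x c : A, Term.eval P.app t ![u, v, x] = some c → P.app w x = some c := by
  obtain ⟨T, hT, hreal⟩ := P.complete 2 t
  have hT' : {p : I.carrier × A | p.2 ∈ T} ∈ sliceFilt P I := base_mem_sliceFilt hT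
  have hdef1 : fibSubDef P.app {p : I.carrier × A | p.2 ∈ T} U := by
    intro i r s hr _
    obtain ⟨s', w', h1, -⟩ := realizes3_chain P hreal hr s s
    simp [h1]
  have h1mem := sliceFilt_appClosed hT' hU hdef1
  have hdef2 : fibSubDef P.app (fibSubApp P.app {p : I.carrier × A | p.2 ∈ T} U) V := by
    rintro i s v ⟨r, u, hr, hu, hru⟩ _
    obtain ⟨s', w', hs', hw'⟩ := realizes3_chain P hreal hr u v
    rw [hru] at hs'
    injection hs' with h
    subst h
    simp [hw']
  refine ⟨_, sliceFilt_appClosed h1mem hV hdef2, ?_⟩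
  rintro i w ⟨s, v, ⟨r, u, hr, hu, hru⟩, hv, hsv⟩
  refine ⟨u, v, hu, hv, fun x c hc => ?_⟩
  have h2 : appVec P.app r (2 + 1) ![u, v, x] = some c := (hreal r hr ![u, v, x]).2 c hc
  rw [appVec_three_cons, hru] at h2
  simp only [Option.bind_some] at h2
  rw [hsv] at h2
  simpa using h2

/- ### The category of assemblies over the slice PCA `(A,φ)/I` -/

/-- Assemblies over the slice PCA `(A,φ)/I`. -/
structure SliceAsm (P : PCA A) (I : Asm P) : Type 1 where
  carrier : Type
  k : carrier → I.carrier
  E : carrier → A → Prop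
  total : ∀ x, ∃ a, E x a

/-- Fiberwise tracking for morphisms of assemblies over `(A,φ)/I`. -/
def SliceTracks (P : PCA A) (I : Asm P) {X Y : SliceAsm P I} (U : Set (I.carrier × A))
    (f : X.carrier → Y.carrier) : Prop :=
  ∀ x a r, X.E x a → (X.k x, r) ∈ U → ∃ b, P.app r a = some b ∧ Y.E (f x) b

instance sliceAsmCategory (P : PCA A) (I : Asm P) : Category (SliceAsm P I) where
  Hom X Y := {f : X.carrier → Y.carrier //
    (∀ x, Y.k (f x) = X.k x) ∧ ∃ U ∈ sliceFilt P I, SliceTracks P I U f}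
  id X := ⟨fun x => x, fun _ => rfl, by
    obtain ⟨U, hU, hI⟩ := exists_ireal P
    exact ⟨{p | p.2 ∈ U}, base_mem_sliceFilt hU,
      fun x a r hx hr => ⟨a, hI r hr a, hx⟩⟩⟩
  comp {X Y Z} f g := ⟨fun x => g.1 (f.1 x), fun x => (g.2.1 (f.1 x)).trans (f.2.1 x), by
    obtain ⟨U, hU, hf⟩ := f.2.2
    obtain ⟨V, hV, hg⟩ := g.2.2
    obtain ⟨W, hW, hkey⟩ := exists_fib_tracker3 P I
      (Term.op (.var 1) (.op (.var 0) (.var 2))) hU hV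
    refine ⟨W, hW, fun x a w hx hw => ?_⟩
    obtain ⟨u, v, hu, hv, key⟩ := hkey (X.k x) w hw
    obtain ⟨b, hb, hYb⟩ := hf x a u hx hu
    have hv' : (Y.k (f.1 x), v) ∈ V := by rw [f.2.1 x]; exact hv
    obtain ⟨c, hc, hZc⟩ := hg (f.1 x) b v hYb hv'
    refine ⟨c, key a c ?_, hZc⟩
    rw [eval_comp_term, hb]
    simpa using hc⟩
  id_comp f := Subtype.ext rfl
  comp_id f := Subtype.ext rfl
  assoc f g h := Subtype.ext rfl

/- ### Families of assemblies (products of PCAs) -/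

/-- The category of families of assemblies over a family of PCAs, with uniformly
tracked families of morphisms; this is the category of assemblies over the product
PCA of the family, taken over the product of the base categories. -/
structure FamAsm {I : Type} {A : I → Type} (P : ∀ i, PCA (A i)) : Type 1 where
  obj : ∀ i, Asm (P i)

instance famAsmCategory {I : Type} {A : I → Type} (P : ∀ i, PCA (A i)) :
    Category (FamAsm P) where
  Hom X Y := {f : ∀ i, (X.obj i).carrier → (Y.obj i).carrier //
    ∃ U : ∀ i, Set (A i), (∀ i, U i ∈ (P i).filt) ∧ ∀ i, Tracks (P i) (U i) (f i)}
  id X := ⟨fun i x => x, by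
    choose U hU using fun i => exists_ireal (P i)
    exact ⟨U, fun i => (hU i).1, fun i x a r hx hr => ⟨a, (hU i).2 r hr a, hx⟩⟩⟩
  comp {X Y Z} f g := ⟨fun i x => g.1 i (f.1 i x), by
    obtain ⟨U, hU, hf⟩ := f.2
    obtain ⟨V, hV, hg⟩ := g.2
    choose W hW using fun i => exists_tracker3 (P i)
      (Term.op (.var 1) (.op (.var 0) (.var 2))) (hU i) (hV i)
    refine ⟨W, fun i => (hW i).1, fun i x a w hx hw => ?_⟩
    obtain ⟨u, hu, v, hv, key⟩ := (hW i).2 w hw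
    obtain ⟨b, hb, hYb⟩ := hf i x a u hx hu
    obtain ⟨c, hc, hZc⟩ := hg i (f.1 i x) b v hYb hv
    refine ⟨c, key a c ?_, hZc⟩
    rw [eval_comp_term, hb]
    simpa using hc⟩
  id_comp f := Subtype.ext rfl
  comp_id f := Subtype.ext rfl
  assoc f g h := Subtype.ext rfl

/- ### Auxiliary development -/

section Aux

variable {A B : Type}

lemma hom_ext' {P : PCA A} {X Y : Asm P} {f g : X ⟶ Y} (h : f.1 = g.1) : f = g :=
  Subtype.ext h

lemma appVec_split (app : PApp A) (r : A) (n : ℕ) :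
    ∀ (m : ℕ) (a : Fin (n + m) → A),
      appVec app r (n + m) a =
        (appVec app r n fun i => a (Fin.castAdd m i)).bind
          (fun w => appVec app w m fun j => a (Fin.natAdd n j)) := by
  intro m
  induction m with
  | zero =>
    intro a
    have h1 : (fun i => a (Fin.castAdd 0 i)) = a := funext fun i => congrArg a (Fin.ext rfl)
    rw [h1]
    show appVec app r n a = (appVec app r n a).bind (fun w => some w)
    cases appVec app r n a <;> rfl
  | succ m ih =>
    intro a
    have e1 : (fun i : Fin n => (fun i : Fin (n+m) => a i.castSucc) (Fin.castAdd m i))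
        = (fun i : Fin n => a (Fin.castAdd (m+1) i)) := funext fun i => congrArg a (Fin.ext rfl)
    show (appVec app r (n+m) fun i => a i.castSucc).bind
        (fun s => app s (a (Fin.last (n+m)))) = _
    rw [ih (fun i => a i.castSucc), Option.bind_assoc, e1]
    congr 1

lemma appVec_prefix_isSome (app : PApp A) (r : A) :
    ∀ (l k : ℕ) (hkl : k ≤ l) (b : Fin l → A), (appVec app r l b).isSome →
      (appVec app r k fun i => b (Fin.castLE hkl i)).isSome := by
  intro l
  induction l with
  | zero =>
    intro k hkl b hb
    obtain rfl : k = 0 := Nat.le_zero.mp hkl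
    exact hb
  | succ l ih =>
    intro k hkl b hb
    rcases Nat.eq_or_lt_of_le hkl with h | h
    · subst h
      have : (fun i => b (Fin.castLE hkl i)) = b := funext fun i => congrArg b (Fin.ext rfl)
      rw [this]; exact hb
    · have hk : k ≤ l := Nat.lt_succ_iff.mp h
      have hb' : (appVec app r l fun i => b i.castSucc).isSome := isSome_bind_left hb
      have := ih k hk (fun i => b i.castSucc) hb'
      have e : (fun i : Fin k => (fun i : Fin l => b i.castSucc) (Fin.castLE hk i))
          = (fun i : Fin k => b (Fin.castLE hkl i)) := funext fun i => congrArg b (Fin.ext rfl)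
      rwa [e] at this

/-- The general tracker lemma: for a term with `n + (m+1)` variables and filter sets
`U i` for the first `n` variables, there is a filter set `W` of elements `w` behaving like
`λ x₀ … x_m. t(u, x)` for suitable `u i ∈ U i`. -/
lemma exists_tracker_gen (R : PCA A) (n m : ℕ) (t : Term (n + (m+1)))
    (U : Fin n → Set A) (hU : ∀ i, U i ∈ R.filt) :
    ∃ W ∈ R.filt, ∀ w ∈ W, ∃ u : Fin n → A, (∀ i, u i ∈ U i) ∧
      ∀ a : Fin (n + (m+1)) → A, (∀ i : Fin n, a (Fin.castAdd (m+1) i) = u i) →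
        ∀ c, Term.eval R.app t a = some c →
          appVec R.app w (m+1) (fun j => a (Fin.natAdd n j)) = some c := by
  obtain ⟨d⟩ := R.nonemptyCarrier
  obtain ⟨T, hT, hreal⟩ := R.complete (n+m) t
  have hdefall : ∀ r ∈ T, ∀ b : Fin (n+m) → A, (appVec R.app r (n+m) b).isSome := by
    intro r hr b
    have h1 := (hreal r hr (Fin.snoc b d)).1
    have e : (fun i : Fin (n+m) => (Fin.snoc b d : Fin (n+m+1) → A) i.castSucc) = b := by
      funext i; simp
    rwa [e] at h1
  have hdefk : ∀ (k : ℕ) (hk : k ≤ n+m), ∀ r ∈ T, ∀ u : Fin k → A,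
      (appVec R.app r k u).isSome := by
    intro k hk r hr u
    have hb := hdefall r hr (fun i => if h : (i : ℕ) < k then u ⟨i, h⟩ else d)
    have := appVec_prefix_isSome R.app r (n+m) k hk _ hb
    have e : (fun i : Fin k =>
        (fun i : Fin (n+m) => if h : (i : ℕ) < k then u ⟨i, h⟩ else d) (Fin.castLE hk i)) = u := by
      funext i
      simp only [Fin.castLE]
      rw [dif_pos i.isLt]
    rwa [e] at this
  have claim : ∀ (k : ℕ) (hk : k ≤ n), ∃ W ∈ R.filt, ∀ w ∈ W, ∃ r ∈ T, ∃ u : Fin n → A,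
      (∀ i, u i ∈ U i) ∧ appVec R.app r k (fun i => u (Fin.castLE hk i)) = some w := by
    intro k
    induction k with
    | zero =>
      intro _
      refine ⟨T, hT, fun w hw => ⟨w, hw, fun i => (R.isFilter.nonempty _ (hU i)).choose,
        fun i => (R.isFilter.nonempty _ (hU i)).choose_spec, rfl⟩⟩
    | succ k ih =>
      intro hk
      have hk' : k ≤ n := Nat.le_of_succ_le hk
      have hkn : k < n := hk
      obtain ⟨Wk, hWk, hWkspec⟩ := ih hk'
      -- key computation
      have key : ∀ w ∈ Wk, ∀ v ∈ U ⟨k, hkn⟩, ∃ r ∈ T, ∃ u : Fin n → A,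
          (∀ i, u i ∈ U i) ∧
          appVec R.app r (k+1) (fun i => u (Fin.castLE hk i)) = R.app w v := by
        intro w hw v hv
        obtain ⟨r, hr, u, hu, hru⟩ := hWkspec w hw
        set u' : Fin n → A := fun i => if h : (i : ℕ) = k then v else u i with hu'
        refine ⟨r, hr, u', ?_, ?_⟩
        · intro i
          by_cases h : (i : ℕ) = k
          · have : i = ⟨k, hkn⟩ := Fin.ext h
            rw [hu', this]
            simpa using hv
          · simp only [hu', dif_neg h]
            exact hu i
        · show (appVec R.app r k fun i : Fin k => u' (Fin.castLE hk i.castSucc)).bind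
            (fun s => R.app s (u' (Fin.castLE hk (Fin.last k)))) = R.app w v
          have e1 : (fun i : Fin k => u' (Fin.castLE hk i.castSucc))
              = (fun i : Fin k => u (Fin.castLE hk' i)) := by
            funext i
            have hne : ((Fin.castLE hk i.castSucc : Fin n) : ℕ) ≠ k := Nat.ne_of_lt i.isLt
            simp only [hu', dif_neg hne]
            exact congrArg u (Fin.ext rfl)
          have e2 : u' (Fin.castLE hk (Fin.last k)) = v := dif_pos rfl
          rw [e1, e2, hru, Option.bind_some]
      have hdef : SubDef R.app Wk (U ⟨k, hkn⟩) := by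
        intro w hw v hv
        obtain ⟨r, hr, u, hu, hru⟩ := key w hw v hv
        rw [← hru]
        exact hdefk (k+1) (Nat.le_trans hk (Nat.le_add_right n m)) r hr _
      refine ⟨SubApp R.app Wk (U ⟨k, hkn⟩), R.isFilter.appClosed _ hWk _ (hU _) hdef, ?_⟩
      rintro w ⟨w', hw', v, hv, hwv⟩
      obtain ⟨r, hr, u, hu, hru⟩ := key w' hw' v hv
      exact ⟨r, hr, u, hu, by rw [hru, hwv]⟩
  obtain ⟨W, hW, hWspec⟩ := claim n le_rfl
  refine ⟨W, hW, fun w hw => ?_⟩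
  obtain ⟨r, hr, u, hu, hru⟩ := hWspec w hw
  have hru' : appVec R.app r n u = some w := by
    have e : (fun i : Fin n => u (Fin.castLE le_rfl i)) = u :=
      funext fun i => congrArg u (Fin.ext rfl)
    rwa [e] at hru
  refine ⟨u, hu, fun a ha c hc => ?_⟩
  have h2 : appVec R.app r (n + (m+1)) a = some c := (hreal r hr a).2 c hc
  rw [appVec_split R.app r n (m+1) a] at h2
  have e : (fun i : Fin n => a (Fin.castAdd (m+1) i)) = u := funext ha
  rw [e, hru', Option.bind_some] at h2
  exact h2

end Aux
section Combinators

variable {A : Type}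

/-- Identity realizers. -/
noncomputable def iSet (R : PCA A) : Set A := (exists_ireal R).choose

lemma iSet_mem (R : PCA A) : iSet R ∈ R.filt := (exists_ireal R).choose_spec.1

lemma iSet_app (R : PCA A) : ∀ r ∈ iSet R, ∀ a : A, R.app r a = some a :=
  (exists_ireal R).choose_spec.2

lemma exists_k (R : PCA A) : ∃ K ∈ R.filt, ∀ k ∈ K, ∀ x : A,
    ∃ d, R.app k x = some d ∧ ∀ y, R.app d y = some x := by
  obtain ⟨K, hK, hreal⟩ := R.complete 1 (.var 0)
  refine ⟨K, hK, fun k hk x => ?_⟩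
  have h1 : (R.app k x).isSome := (hreal k hk ![x, x]).1
  obtain ⟨d, hd⟩ := Option.isSome_iff_exists.mp h1
  refine ⟨d, hd, fun y => ?_⟩
  have h2 : appVec R.app k 2 ![x, y] = some x :=
    (hreal k hk ![x, y]).2 x (by simp [Term.eval])
  show R.app d y = some x
  have : appVec R.app k 2 ![x, y] = (R.app k x).bind fun s => R.app s y := rfl
  rw [this, hd, Option.bind_some] at h2
  exact h2

lemma exists_k' (R : PCA A) : ∃ K ∈ R.filt, ∀ k ∈ K, ∀ x : A,
    ∃ d, R.app k x = some d ∧ ∀ y, R.app d y = some y := by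
  obtain ⟨K, hK, hreal⟩ := R.complete 1 (.var 1)
  refine ⟨K, hK, fun k hk x => ?_⟩
  have h1 : (R.app k x).isSome := (hreal k hk ![x, x]).1
  obtain ⟨d, hd⟩ := Option.isSome_iff_exists.mp h1
  refine ⟨d, hd, fun y => ?_⟩
  have h2 : appVec R.app k 2 ![x, y] = some y :=
    (hreal k hk ![x, y]).2 y (by simp [Term.eval])
  have : appVec R.app k 2 ![x, y] = (R.app k x).bind fun s => R.app s y := rfl
  rw [this, hd, Option.bind_some] at h2
  exact h2

lemma exists_pr (R : PCA A) : ∃ Pr ∈ R.filt, ∀ p ∈ Pr, ∀ x y : A,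
    ∃ w, (R.app p x).bind (fun s => R.app s y) = some w ∧
      ∀ z c, (R.app z x).bind (fun s => R.app s y) = some c → R.app w z = some c := by
  obtain ⟨Pr, hPr, hreal⟩ := R.complete 2 (.op (.op (.var 2) (.var 0)) (.var 1))
  refine ⟨Pr, hPr, fun p hp x y => ?_⟩
  have h1 := (hreal p hp ![x, y, y]).1
  rw [appVec_two_pre] at h1
  obtain ⟨w, hw⟩ := Option.isSome_iff_exists.mp h1
  refine ⟨w, hw, fun z c hc => ?_⟩
  have hev : Term.eval R.app (.op (.op (.var 2) (.var 0)) (.var 1)) ![x, y, z] = some c := by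
    simp only [Term.eval]
    show ((R.app z x).bind fun s => (some y).bind fun y' => R.app s y') = some c
    simpa using hc
  have h2 : appVec R.app p (2+1) ![x, y, z] = some c := (hreal p hp ![x, y, z]).2 c hev
  rw [appVec_three_cons, hw, Option.bind_some] at h2
  exact h2

/-- Realizers of `λ x y. x`. -/
noncomputable def kSet (R : PCA A) : Set A := (exists_k R).choose
lemma kSet_mem (R : PCA A) : kSet R ∈ R.filt := (exists_k R).choose_spec.1
lemma kSet_app (R : PCA A) : ∀ k ∈ kSet R, ∀ x : A,
    ∃ d, R.app k x = some d ∧ ∀ y, R.app d y = some x := (exists_k R).choose_spec.2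

/-- Realizers of `λ x y. y`. -/
noncomputable def kSet' (R : PCA A) : Set A := (exists_k' R).choose
lemma kSet'_mem (R : PCA A) : kSet' R ∈ R.filt := (exists_k' R).choose_spec.1
lemma kSet'_app (R : PCA A) : ∀ k ∈ kSet' R, ∀ x : A,
    ∃ d, R.app k x = some d ∧ ∀ y, R.app d y = some y := (exists_k' R).choose_spec.2

/-- Realizers of `λ x y z. z x y` (pairing). -/
noncomputable def prSet (R : PCA A) : Set A := (exists_pr R).choose
lemma prSet_mem (R : PCA A) : prSet R ∈ R.filt := (exists_pr R).choose_spec.1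
lemma prSet_app (R : PCA A) : ∀ p ∈ prSet R, ∀ x y : A,
    ∃ w, (R.app p x).bind (fun s => R.app s y) = some w ∧
      ∀ z c, (R.app z x).bind (fun s => R.app s y) = some c → R.app w z = some c :=
  (exists_pr R).choose_spec.2

/-- `c` is a pair code for `(a, b)`. -/
def PairCode (R : PCA A) (a b c : A) : Prop :=
  ∃ p ∈ prSet R, (R.app p a).bind (fun s => R.app s b) = some c

lemma pairCode_exists (R : PCA A) (a b : A) : ∃ c, PairCode R a b c := by
  obtain ⟨p, hp⟩ := (R.isFilter.nonempty _ (prSet_mem R))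
  obtain ⟨w, hw, -⟩ := prSet_app R p hp a b
  exact ⟨w, p, hp, hw⟩

lemma pairCode_app {R : PCA A} {a b c : A} (h : PairCode R a b c) {z w : A}
    (hz : (R.app z a).bind (fun s => R.app s b) = some w) : R.app c z = some w := by
  obtain ⟨p, hp, hc⟩ := h
  obtain ⟨w', hw', hspec⟩ := prSet_app R p hp a b
  rw [hc] at hw'
  injection hw' with hww
  subst hww
  exact hspec z w hz

lemma pairCode_fst {R : PCA A} {a b c : A} (h : PairCode R a b c) :
    ∀ k ∈ kSet R, R.app c k = some a := by
  intro k hk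
  obtain ⟨d, hd, hdy⟩ := kSet_app R k hk a
  exact pairCode_app h (by rw [hd, Option.bind_some]; exact hdy b)

lemma pairCode_snd {R : PCA A} {a b c : A} (h : PairCode R a b c) :
    ∀ k ∈ kSet' R, R.app c k = some b := by
  intro k hk
  obtain ⟨d, hd, hdy⟩ := kSet'_app R k hk a
  exact pairCode_app h (by rw [hd, Option.bind_some]; exact hdy b)

/-- Test: reproduce a 2-parameter 1-variable tracker from the general lemma. -/
lemma test_tracker (R : PCA A) {U V : Set A} (hU : U ∈ R.filt) (hV : V ∈ R.filt) :
    ∃ W ∈ R.filt, ∀ w ∈ W, ∃ u ∈ U, ∃ v ∈ V,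
      ∀ x c : A, ((R.app u x).bind fun s => R.app v s) = some c → R.app w x = some c := by
  obtain ⟨W, hW, hspec⟩ := exists_tracker_gen R 2 0
    (.op (.var 1) (.op (.var 0) (.var 2))) ![U, V] (by
      intro i
      fin_cases i <;> assumption)
  refine ⟨W, hW, fun w hw => ?_⟩
  obtain ⟨u, hu, hkey⟩ := hspec w hw
  refine ⟨u 0, by simpa using hu 0, u 1, by simpa using hu 1, fun x c hc => ?_⟩
  have := hkey ![u 0, u 1, x] (by intro i; fin_cases i <;> rfl) c (by
    simp only [Term.eval, Option.bind_some]
    exact hc)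
  exact this

end Combinators
section AsmLimits

open Limits

variable {A : Type} {R : PCA A}

/-- Build a tracked morphism whose underlying map preserves realizers. -/
lemma tracks_id_like {X Y : Asm R} (g : X.carrier → Y.carrier)
    (h : ∀ x a, X.E x a → Y.E (g x) a) : ∃ U ∈ R.filt, Tracks R U g :=
  ⟨iSet R, iSet_mem R, fun x a r hx hr => ⟨a, iSet_app R r hr a, h x a hx⟩⟩

/-- The subassembly on a subset, with the restricted realizability relation. -/
def subAsm (R : PCA A) (Z : Asm R) (S : Set Z.carrier) : Asm R where
  carrier := {z // z ∈ S}
  E := fun z c => Z.E z.1 c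
  total := fun z => Z.total z.1

def subIncl (Z : Asm R) (S : Set Z.carrier) : subAsm R Z S ⟶ Z :=
  ⟨fun z => z.1, tracks_id_like _ fun _ _ h => h⟩

/-- Corestriction of a morphism into a subassembly. -/
def coreSub {W Z : Asm R} (m : W ⟶ Z) {S : Set Z.carrier} (h : ∀ w, m.1 w ∈ S) :
    W ⟶ subAsm R Z S := by
  refine ⟨fun w => ⟨m.1 w, h w⟩, ?_⟩
  obtain ⟨U, hU, hm⟩ := m.2
  exact ⟨U, hU, fun x a r hx hr => hm x a r hx hr⟩

lemma subIncl_mono {Z : Asm R} {S : Set Z.carrier} : Mono (subIncl Z S) := by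
  constructor
  intro W g h hgh
  apply hom_ext'
  funext w
  exact Subtype.ext (congrFun (congrArg Subtype.val hgh) w)

/-- Binary product assembly via pairing. -/
def prodAsm (R : PCA A) (X Y : Asm R) : Asm R where
  carrier := X.carrier × Y.carrier
  E := fun z c => ∃ a b, X.E z.1 a ∧ Y.E z.2 b ∧ PairCode R a b c
  total := fun z => by
    obtain ⟨a, ha⟩ := X.total z.1
    obtain ⟨b, hb⟩ := Y.total z.2
    obtain ⟨c, hc⟩ := pairCode_exists R a b
    exact ⟨c, a, b, ha, hb, hc⟩

def prodFst (X Y : Asm R) : prodAsm R X Y ⟶ X := by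
  refine ⟨Prod.fst, ?_⟩
  obtain ⟨W, hW, hspec⟩ := exists_tracker_gen R 1 0 (.op (.var 1) (.var 0)) ![kSet R]
    (by intro i; fin_cases i; exact kSet_mem R)
  refine ⟨W, hW, fun z c w hz hw => ?_⟩
  obtain ⟨a, b, ha, hb, hab⟩ := hz
  obtain ⟨u, hu, hkey⟩ := hspec w hw
  have hk : u 0 ∈ kSet R := by simpa using hu 0
  have happ : R.app c (u 0) = some a := pairCode_fst hab (u 0) hk
  have := hkey ![u 0, c] (by intro i; fin_cases i <;> rfl) a (by
    simp only [Term.eval, Option.bind_some]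
    exact happ)
  exact ⟨a, this, ha⟩

def prodSnd (X Y : Asm R) : prodAsm R X Y ⟶ Y := by
  refine ⟨Prod.snd, ?_⟩
  obtain ⟨W, hW, hspec⟩ := exists_tracker_gen R 1 0 (.op (.var 1) (.var 0)) ![kSet' R]
    (by intro i; fin_cases i; exact kSet'_mem R)
  refine ⟨W, hW, fun z c w hz hw => ?_⟩
  obtain ⟨a, b, ha, hb, hab⟩ := hz
  obtain ⟨u, hu, hkey⟩ := hspec w hw
  have hk : u 0 ∈ kSet' R := by simpa using hu 0
  have happ : R.app c (u 0) = some b := pairCode_snd hab (u 0) hk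
  have := hkey ![u 0, c] (by intro i; fin_cases i <;> rfl) b (by
    simp only [Term.eval, Option.bind_some]
    exact happ)
  exact ⟨b, this, hb⟩

def prodLift {Z X Y : Asm R} (f : Z ⟶ X) (g : Z ⟶ Y) : Z ⟶ prodAsm R X Y := by
  refine ⟨fun z => (f.1 z, g.1 z), ?_⟩
  obtain ⟨U, hU, hf⟩ := f.2
  obtain ⟨V, hV, hg⟩ := g.2
  obtain ⟨W, hW, hspec⟩ := exists_tracker_gen R 3 0
    (.op (.op (.var 0) (.op (.var 1) (.var 3))) (.op (.var 2) (.var 3)))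
    ![prSet R, U, V] (by intro i; fin_cases i; exacts [prSet_mem R, hU, hV])
  refine ⟨W, hW, fun z e w hz hw => ?_⟩
  obtain ⟨u, hu, hkey⟩ := hspec w hw
  have hp : u 0 ∈ prSet R := by simpa using hu 0
  have hu1 : u 1 ∈ U := by simpa using hu 1
  have hu2 : u 2 ∈ V := by simpa using hu 2
  obtain ⟨a, hfa, hXa⟩ := hf z e (u 1) hz hu1
  obtain ⟨b, hgb, hYb⟩ := hg z e (u 2) hz hu2
  obtain ⟨c, hc, -⟩ := prSet_app R (u 0) hp a b
  have := hkey ![u 0, u 1, u 2, e] (by intro i; fin_cases i <;> rfl) c (by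
    simp only [Term.eval, Option.bind_some]
    show ((R.app (u 1) e).bind fun x => R.app (u 0) x).bind
      (fun s => (R.app (u 2) e).bind fun y => R.app s y) = some c
    rw [hfa, hgb]
    simp only [Option.bind_some]
    exact hc)
  exact ⟨c, this, a, b, hXa, hYb, u 0, hp, hc⟩

def prodFan (X Y : Asm R) : BinaryFan X Y := BinaryFan.mk (prodFst X Y) (prodSnd X Y)

def prodFanIsLimit (X Y : Asm R) : IsLimit (prodFan X Y) := by
  refine BinaryFan.isLimitMk (fun s => prodLift s.fst s.snd) (fun s => hom_ext' rfl)
    (fun s => hom_ext' rfl) (fun s m h1 h2 => ?_)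
  apply hom_ext'
  funext z
  refine Prod.ext ?_ ?_
  · exact congrFun (congrArg Subtype.val h1) z
  · exact congrFun (congrArg Subtype.val h2) z

/-- The terminal assembly. -/
def oneAsm (R : PCA A) : Asm R := nablaObj R PUnit

def oneIsTerminal : IsTerminal (oneAsm R) :=
  IsTerminal.ofUniqueHom
    (fun X => ⟨fun _ => PUnit.unit, tracks_id_like _ fun _ _ _ => trivial⟩)
    (fun X m => hom_ext' (funext fun x => rfl))

/- ### Equalizers -/

def eqAsm {Z W : Asm R} (u v : Z ⟶ W) : Asm R := subAsm R Z {z | u.1 z = v.1 z}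

def eqIncl {Z W : Asm R} (u v : Z ⟶ W) : eqAsm u v ⟶ Z := subIncl Z _

lemma eqCondition {Z W : Asm R} (u v : Z ⟶ W) : eqIncl u v ≫ u = eqIncl u v ≫ v :=
  hom_ext' (funext fun z => z.2)

def eqFork {Z W : Asm R} (u v : Z ⟶ W) : Fork u v := Fork.ofι (eqIncl u v) (eqCondition u v)

def eqForkIsLimit {Z W : Asm R} (u v : Z ⟶ W) : IsLimit (eqFork u v) := by
  refine Fork.IsLimit.mk _ (fun s => coreSub s.ι
    (fun w => congrFun (congrArg Subtype.val s.condition) w)) (fun s => hom_ext' rfl)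
    (fun s m hm => ?_)
  apply hom_ext'
  funext w
  exact Subtype.ext (congrFun (congrArg Subtype.val hm) w)

/- ### Pullbacks -/

def pbAsm {X Y Z : Asm R} (f : X ⟶ Z) (g : Y ⟶ Z) : Asm R :=
  subAsm R (prodAsm R X Y) {p | f.1 p.1 = g.1 p.2}

def pbFst {X Y Z : Asm R} (f : X ⟶ Z) (g : Y ⟶ Z) : pbAsm f g ⟶ X :=
  subIncl _ _ ≫ prodFst X Y

def pbSnd {X Y Z : Asm R} (f : X ⟶ Z) (g : Y ⟶ Z) : pbAsm f g ⟶ Y :=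
  subIncl _ _ ≫ prodSnd X Y

lemma pbCondition {X Y Z : Asm R} (f : X ⟶ Z) (g : Y ⟶ Z) :
    pbFst f g ≫ f = pbSnd f g ≫ g := hom_ext' (funext fun p => p.2)

def pbCone {X Y Z : Asm R} (f : X ⟶ Z) (g : Y ⟶ Z) : PullbackCone f g :=
  PullbackCone.mk (pbFst f g) (pbSnd f g) (pbCondition f g)

def pbConeIsLimit {X Y Z : Asm R} (f : X ⟶ Z) (g : Y ⟶ Z) : IsLimit (pbCone f g) := by
  refine PullbackCone.IsLimit.mk (pbCondition f g)
    (fun s => coreSub (prodLift s.fst s.snd)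
      (fun w => congrFun (congrArg Subtype.val s.condition) w))
    (fun s => hom_ext' rfl) (fun s => hom_ext' rfl) (fun s m h1 h2 => ?_)
  apply hom_ext'
  funext w
  refine Subtype.ext (Prod.ext ?_ ?_)
  · exact congrFun (congrArg Subtype.val h1) w
  · exact congrFun (congrArg Subtype.val h2) w

instance : HasTerminal (Asm R) := oneIsTerminal.hasTerminal

instance : HasPullbacks (Asm R) := by
  have h : ∀ {X Y Z : Asm R} (f : X ⟶ Z) (g : Y ⟶ Z), HasLimit (cospan f g) :=
    fun f g => HasLimit.mk ⟨_, pbConeIsLimit f g⟩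
  exact @hasPullbacks_of_hasLimit_cospan _ _ (fun {X Y Z f g} => h f g)

end AsmLimits
section RegEpiChar

open Limits

variable {A : Type} {R : PCA A}

/-- Descent data for a surjection: a uniform way of lifting realizers along `e`. -/
def Descent {X Y : Asm R} (e : X ⟶ Y) : Prop :=
  ∃ U ∈ R.filt, ∀ y b, Y.E y b → ∀ r ∈ U,
    ∃ c, R.app r b = some c ∧ ∃ x, e.1 x = y ∧ X.E x c

lemma cofork_key {X Y : Asm R} (e : X ⟶ Y) (s : Cofork (pbFst e e) (pbSnd e e))
    (x x' : X.carrier) (h : e.1 x = e.1 x') : (Cofork.π s).1 x = (Cofork.π s).1 x' :=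
  congrFun (congrArg Subtype.val s.condition) ⟨(x, x'), h⟩

noncomputable def coeqDesc {X Y : Asm R} (e : X ⟶ Y) (hsurj : Function.Surjective e.1)
    (hdesc : Descent e) (s : Cofork (pbFst e e) (pbSnd e e)) : Y ⟶ s.pt := by
  refine ⟨fun y => (Cofork.π s).1 (hsurj y).choose, ?_⟩
  obtain ⟨U, hU, hdes⟩ := hdesc
  obtain ⟨V, hV, hπ⟩ := (Cofork.π s).2
  obtain ⟨W, hW, hspec⟩ := exists_tracker_gen R 2 0
    (.op (.var 1) (.op (.var 0) (.var 2))) ![U, V]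
    (by intro i; fin_cases i <;> assumption)
  refine ⟨W, hW, fun y b w hb hw => ?_⟩
  obtain ⟨u, hu, hkey⟩ := hspec w hw
  have hu0 : u 0 ∈ U := by simpa using hu 0
  have hu1 : u 1 ∈ V := by simpa using hu 1
  obtain ⟨c, hc, x, hex, hXc⟩ := hdes y b hb (u 0) hu0
  obtain ⟨d, hd, hEd⟩ := hπ x c (u 1) hXc hu1
  refine ⟨d, hkey ![u 0, u 1, b] (by intro i; fin_cases i <;> rfl) d (by
    simp only [Term.eval, Option.bind_some]
    show ((R.app (u 0) b).bind fun yv => R.app (u 1) yv) = some d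
    rw [hc, Option.bind_some]
    exact hd), ?_⟩
  have hπeq : (Cofork.π s).1 x = (Cofork.π s).1 (hsurj y).choose :=
    cofork_key e s x _ (by rw [hex, (hsurj y).choose_spec])
  show s.pt.E ((Cofork.π s).1 (hsurj y).choose) d
  exact hπeq ▸ hEd

lemma nonempty_regularEpi_of_descent {X Y : Asm R} (e : X ⟶ Y)
    (hsurj : Function.Surjective e.1) (hdesc : Descent e) : Nonempty (RegularEpi e) := by
  refine ⟨⟨pbAsm e e, pbFst e e, pbSnd e e, pbCondition e e, ?_⟩⟩
  refine Cofork.IsColimit.mk _ (coeqDesc e hsurj hdesc) (fun s => ?_) (fun s m hm => ?_)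
  · apply hom_ext'
    funext x
    exact cofork_key e s _ _ (hsurj (e.1 x)).choose_spec
  · apply hom_ext'
    funext y
    obtain ⟨x, hx⟩ := hsurj y
    have h1 : m.1 (e.1 x) = (Cofork.π s).1 x := congrFun (congrArg Subtype.val hm) x
    have h2 : (Cofork.π s).1 (hsurj y).choose = (Cofork.π s).1 x :=
      cofork_key e s _ _ (by rw [(hsurj y).choose_spec, hx])
    rw [hx] at h1
    show m.1 y = (Cofork.π s).1 (hsurj y).choose
    rw [h1, h2]

lemma descent_of_regularEpi {X Y : Asm R} (e : X ⟶ Y) (re : RegularEpi e) :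
    Function.Surjective e.1 ∧ Descent e := by
  haveI : RegularEpi e := re
  haveI : Epi e := RegularEpi.epi e re
  have hsurj : Function.Surjective e.1 := by
    let χ : Y ⟶ nablaObj R Prop := ⟨fun y => ∃ x, e.1 x = y, tracks_id_like _ fun _ _ _ => trivial⟩
    let τ : Y ⟶ nablaObj R Prop := ⟨fun _ => True, tracks_id_like _ fun _ _ _ => trivial⟩
    have hcomm : e ≫ χ = e ≫ τ := hom_ext' (funext fun x => eq_true ⟨x, rfl⟩)
    have hχτ : χ = τ := (cancel_epi e).mp hcomm
    intro y
    exact of_eq_true (congrFun (congrArg Subtype.val hχτ) y)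
  refine ⟨hsurj, ?_⟩
  let Yh : Asm R := ⟨Y.carrier, fun y b => ∃ x, e.1 x = y ∧ X.E x b, fun y => by
    obtain ⟨x, hx⟩ := hsurj y
    obtain ⟨b, hb⟩ := X.total x
    exact ⟨b, x, hx, hb⟩⟩
  let ebar : X ⟶ Yh := ⟨e.1, tracks_id_like _ fun x a hx => ⟨x, rfl, hx⟩⟩
  have cond : re.left ≫ ebar = re.right ≫ ebar := by
    apply hom_ext'
    funext z
    exact congrFun (congrArg Subtype.val re.w) z
  let m : Y ⟶ Yh := re.isColimit.desc (Cofork.ofπ ebar cond)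
  have hfac : e ≫ m = ebar :=
    re.isColimit.fac (Cofork.ofπ ebar cond) WalkingParallelPair.one
  have hmy : ∀ y, m.1 y = y := by
    intro y
    obtain ⟨x, hx⟩ := hsurj y
    have h : m.1 (e.1 x) = e.1 x := congrFun (congrArg Subtype.val hfac) x
    rw [hx] at h
    exact h
  obtain ⟨U, hU, hm⟩ := m.2
  refine ⟨U, hU, fun y b hb r hr => ?_⟩
  obtain ⟨c, hc, hE⟩ := hm y b r hb hr
  have hE' : ∃ x, e.1 x = m.1 y ∧ X.E x c := hE
  rw [hmy y] at hE'
  exact ⟨c, hc, hE'⟩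

end RegEpiChar
section Forward

open Limits

variable {A B : Type} {P : PCA A} {Q : PCA B} {f : A → B → Prop}

/-- Tracker sending any realizer to an element of the `f`-image of a filter set. -/
lemma exists_const_image_tracker (hf : IsAppMor P.app P.filt Q.app Q.filt f)
    {V : Set A} (hV : V ∈ P.filt) :
    ∃ W ∈ Q.filt, ∀ w ∈ W, ∃ v ∈ relImage f V, ∀ x : B, Q.app w x = some v := by
  refine ⟨SubApp Q.app (kSet Q) (relImage f V), ?_, ?_⟩
  · refine Q.isFilter.appClosed _ (kSet_mem Q) _ (hf.image V hV) ?_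
    intro k hk v hv
    obtain ⟨d, hd, -⟩ := kSet_app Q k hk v
    rw [hd]; rfl
  · rintro w ⟨k, hk, v, hv, hkv⟩
    obtain ⟨d, hd, hdy⟩ := kSet_app Q k hk v
    rw [hd] at hkv
    injection hkv with h
    subst h
    exact ⟨v, hv, fun x => hdy x⟩

noncomputable def isTerminal_asm_one (hf : IsAppMor P.app P.filt Q.app Q.filt f) :
    IsTerminal ((asmFunctor hf).obj (oneAsm P)) := by
  refine IsTerminal.ofUniqueHom (fun X => ⟨fun _ => PUnit.unit, ?_⟩)
    (fun X m => hom_ext' (funext fun x => rfl))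
  obtain ⟨W, hW, hspec⟩ := exists_const_image_tracker hf (univ_mem_filt P)
  refine ⟨W, hW, fun x b w hx hw => ?_⟩
  obtain ⟨v, hv, hconst⟩ := hspec w hw
  obtain ⟨a, -, hav⟩ := hv
  exact ⟨v, hconst b, a, trivial, hav⟩

lemma preserves_empty_asmFunctor (hf : IsAppMor P.app P.filt Q.app Q.filt f) :
    PreservesLimitsOfShape (Discrete PEmpty.{1}) (asmFunctor hf) := by
  constructor
  intro K
  constructor
  intro c hc
  have hterm : IsTerminal c.pt := by
    refine IsTerminal.ofUniqueHom (fun X => hc.lift ⟨X, ⟨fun j => j.as.elim, ?_⟩⟩)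
      (fun X m => ?_)
    · intro j; exact j.as.elim
    · apply hc.hom_ext
      intro j; exact j.as.elim
  have hiso : c.pt ≅ oneAsm P := hterm.uniqueUpToIso oneIsTerminal
  have hterm' : IsTerminal ((asmFunctor hf).obj c.pt) :=
    (isTerminal_asm_one hf).ofIso ((asmFunctor hf).mapIso hiso).symm
  exact ⟨⟨fun s => hterm'.from s.pt, fun s j => j.as.elim, fun s m hm => hterm'.hom_ext _ _⟩⟩

lemma descent_asmFunctor (hf : IsAppMor P.app P.filt Q.app Q.filt f) {X Y : Asm P}
    (e : X ⟶ Y) (hd : Descent e) : Descent ((asmFunctor hf).map e) := by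
  obtain ⟨U, hU, hdes⟩ := hd
  obtain ⟨Tf, hTf, htr⟩ := hf.tracked
  obtain ⟨W, hW, hspec⟩ := exists_tracker_gen Q 2 0
    (.op (.op (.var 0) (.var 1)) (.var 2)) ![Tf, relImage f U]
    (by intro i; fin_cases i; exacts [hTf, hf.image U hU])
  refine ⟨W, hW, fun y b hyb w hw => ?_⟩
  obtain ⟨bA, hYbA, hfb⟩ := hyb
  obtain ⟨u, hu, hkey⟩ := hspec w hw
  have hu0 : u 0 ∈ Tf := by simpa using hu 0
  obtain ⟨r, hr, hfr⟩ : ∃ r ∈ U, f r (u 1) := by simpa [relImage] using hu 1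
  obtain ⟨c, hc, x, hex, hXc⟩ := hdes y bA hYbA r hr
  obtain ⟨d, e', hd', he', hfe⟩ := htr r bA c hc (u 1) b hfr hfb (u 0) hu0
  refine ⟨e', hkey ![u 0, u 1, b] (by intro i; fin_cases i <;> rfl) e' (by
    simp only [Term.eval, Option.bind_some]
    show ((Q.app (u 0) (u 1)).bind fun s => Q.app s b) = some e'
    rw [hd', Option.bind_some]
    exact he'), x, hex, c, hXc, hfe⟩

lemma preserves_cospan_asmFunctor (hf : IsAppMor P.app P.filt Q.app Q.filt f)
    {X Y Z : Asm P} (g : X ⟶ Z) (h : Y ⟶ Z) :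
    PreservesLimit (cospan g h) (asmFunctor hf) := by
  apply preservesLimit_of_preserves_limit_cone (pbConeIsLimit g h)
  refine ⟨fun s => ⟨fun t =>
      ⟨((s.π.app WalkingCospan.left).1 t, (s.π.app WalkingCospan.right).1 t), ?_⟩, ?_⟩,
    fun s j => ?_, fun s m hm => ?_⟩
  · -- membership in the pullback subset
    have h1 : g.1 ((s.π.app WalkingCospan.left).1 t) = (s.π.app WalkingCospan.one).1 t :=
      congrFun (congrArg Subtype.val (s.w WalkingCospan.Hom.inl)) t
    have h2 : h.1 ((s.π.app WalkingCospan.right).1 t) = (s.π.app WalkingCospan.one).1 t :=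
      congrFun (congrArg Subtype.val (s.w WalkingCospan.Hom.inr)) t
    show g.1 ((s.π.app WalkingCospan.left).1 t) = h.1 ((s.π.app WalkingCospan.right).1 t)
    rw [h1, h2]
  · -- tracker for the lift
    obtain ⟨Ul, hUl, hl⟩ := (s.π.app WalkingCospan.left).2
    obtain ⟨Ur, hUr, hr⟩ := (s.π.app WalkingCospan.right).2
    obtain ⟨Tf, hTf, htr⟩ := hf.tracked
    obtain ⟨W, hW, hspec⟩ := exists_tracker_gen Q 4 0
      (.op (.op (.var 0) (.op (.op (.var 0) (.var 1)) (.op (.var 2) (.var 4))))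
        (.op (.var 3) (.var 4)))
      ![Tf, relImage f (prSet P), Ul, Ur]
      (by intro i; fin_cases i; exacts [hTf, hf.image _ (prSet_mem P), hUl, hUr])
    refine ⟨W, hW, fun t d w ht hw => ?_⟩
    obtain ⟨u, hu, hkey⟩ := hspec w hw
    have hu0 : u 0 ∈ Tf := by simpa using hu 0
    obtain ⟨p, hp, hfp⟩ : ∃ p ∈ prSet P, f p (u 1) := by simpa [relImage] using hu 1
    have hu2 : u 2 ∈ Ul := by simpa using hu 2
    have hu3 : u 3 ∈ Ur := by simpa using hu 3
    obtain ⟨a', ha', hEa'⟩ := hl t d (u 2) ht hu2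
    obtain ⟨b', hb', hEb'⟩ := hr t d (u 3) ht hu3
    obtain ⟨a, hXa, hfa⟩ := hEa'
    obtain ⟨b, hYb, hfb⟩ := hEb'
    obtain ⟨w₀, hw₀, -⟩ := prSet_app P p hp a b
    obtain ⟨pa, hpa⟩ : ∃ pa, P.app p a = some pa := by
      cases hpap : P.app p a
      · rw [hpap] at hw₀; simp at hw₀
      · exact ⟨_, rfl⟩
    have hpab : P.app pa b = some w₀ := by rw [hpa, Option.bind_some] at hw₀; exact hw₀
    obtain ⟨d₁, e₁, hd₁, he₁, hfe₁⟩ := htr p a pa hpa (u 1) a' hfp hfa (u 0) hu0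
    obtain ⟨d₂, e₂, hd₂, he₂, hfe₂⟩ := htr pa b w₀ hpab e₁ b' hfe₁ hfb (u 0) hu0
    refine ⟨e₂, hkey ![u 0, u 1, u 2, u 3, d] (by intro i; fin_cases i <;> rfl) e₂ (by
      simp only [Term.eval, Option.bind_some]
      show ((((Q.app (u 0) (u 1)).bind fun s => (Q.app (u 2) d).bind fun y => Q.app s y).bind
          fun y => Q.app (u 0) y).bind
            fun s => (Q.app (u 3) d).bind fun y => Q.app s y) = some e₂
      simp only [hd₁, ha', hb', Option.bind_some, he₁, hd₂, he₂]), ?_⟩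
    exact ⟨w₀, ⟨a, b, hXa, hYb, p, hp, hw₀⟩, hfe₂⟩
  · -- fac
    rcases j with (_ | (_ | _)) <;> apply hom_ext'
    · funext t
      exact (congrFun (congrArg Subtype.val (s.w WalkingCospan.Hom.inl)) t : _)
    · rfl
    · rfl
  · -- uniq
    apply hom_ext'
    funext t
    refine Subtype.ext (Prod.ext ?_ ?_)
    · exact congrFun (congrArg Subtype.val (hm WalkingCospan.left)) t
    · exact congrFun (congrArg Subtype.val (hm WalkingCospan.right)) t

lemma preserves_pullbacks_asmFunctor (hf : IsAppMor P.app P.filt Q.app Q.filt f) :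
    PreservesLimitsOfShape WalkingCospan (asmFunctor hf) := by
  constructor
  intro K
  haveI := preserves_cospan_asmFunctor hf (K.map WalkingCospan.Hom.inl)
    (K.map WalkingCospan.Hom.inr)
  exact preservesLimit_of_iso_diagram (asmFunctor hf) (diagramIsoCospan K).symm

lemma preservesFiniteLimits_asmFunctor (hf : IsAppMor P.app P.filt Q.app Q.filt f) :
    PreservesFiniteLimits (asmFunctor hf) := by
  haveI := preserves_empty_asmFunctor hf
  haveI := preserves_pullbacks_asmFunctor hf
  exact preservesFiniteLimits_of_preservesTerminal_and_pullbacks (asmFunctor hf)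

/-- The canonical `Γ`-isomorphism for `asmFunctor`. -/
def gamIso (hf : IsAppMor P.app P.filt Q.app Q.filt f) :
    asmFunctor hf ⋙ Gam Q ≅ Gam P :=
  NatIso.ofComponents (fun X => Iso.refl X.carrier) (fun g => rfl)

/-- The canonical `∇`-isomorphism for `asmFunctor`. -/
def nabIso (hf : IsAppMor P.app P.filt Q.app Q.filt f) :
    Nab P ⋙ asmFunctor hf ≅ Nab Q := by
  refine NatIso.ofComponents (fun Y => ?_) (fun g => ?_)
  · refine ⟨⟨id, tracks_id_like _ fun _ _ _ => trivial⟩, ⟨id, ?_⟩, ?_, ?_⟩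
    · obtain ⟨W, hW, hspec⟩ := exists_const_image_tracker hf (univ_mem_filt P)
      refine ⟨W, hW, fun y b w hy hw => ?_⟩
      obtain ⟨v, hv, hconst⟩ := hspec w hw
      obtain ⟨a, -, hav⟩ := hv
      exact ⟨v, hconst b, a, trivial, hav⟩
    · exact hom_ext' rfl
    · exact hom_ext' rfl
  · exact hom_ext' rfl

end Forward
section Backward

open Limits

variable {A B : Type} {P : PCA A} {Q : PCA B}

/-- The assembly of realizers `(A, =)`. -/
def Astar (P : PCA A) : Asm P := ⟨A, fun a b => b = a, fun a => ⟨a, rfl⟩⟩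

/-- The characteristic map of a subset, to `∇Prop`. -/
def chiS (Z : Asm P) (S : Set Z.carrier) : Z ⟶ nablaObj P Prop :=
  ⟨fun z => z ∈ S, tracks_id_like _ fun _ _ _ => trivial⟩

def tauS (Z : Asm P) : Z ⟶ nablaObj P Prop :=
  ⟨fun _ => True, tracks_id_like _ fun _ _ _ => trivial⟩

lemma subFork_cond (Z : Asm P) (S : Set Z.carrier) :
    subIncl Z S ≫ chiS Z S = subIncl Z S ≫ tauS Z :=
  hom_ext' (funext fun z => eq_true z.2)

def subFork (Z : Asm P) (S : Set Z.carrier) : Fork (chiS Z S) (tauS Z) :=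
  Fork.ofι (subIncl Z S) (subFork_cond Z S)

def subForkIsLimit (Z : Asm P) (S : Set Z.carrier) : IsLimit (subFork Z S) := by
  refine Fork.IsLimit.mk _ (fun s => coreSub s.ι
    (fun w => of_eq_true (congrFun (congrArg Subtype.val s.condition) w)))
    (fun s => hom_ext' rfl) (fun s m hm => ?_)
  apply hom_ext'
  funext w
  exact Subtype.ext (congrFun (congrArg Subtype.val hm) w)

variable (F : Asm P ⥤ Asm Q) (η : F ⋙ Gam Q ≅ Gam P)

/-- The carrier bijection from the `Γ`-isomorphism. -/
def γm (X : Asm P) : (F.obj X).carrier → X.carrier := η.hom.app X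

def σm (X : Asm P) : X.carrier → (F.obj X).carrier := η.inv.app X

lemma γσ (X : Asm P) (x : X.carrier) : γm F η X (σm F η X x) = x :=
  ConcreteCategory.congr_hom (η.inv_hom_id_app X) x

lemma σγ (X : Asm P) (z : (F.obj X).carrier) : σm F η X (γm F η X z) = z :=
  ConcreteCategory.congr_hom (η.hom_inv_id_app X) z

lemma gam_nat {X Y : Asm P} (g : X ⟶ Y) (z : (F.obj X).carrier) :
    γm F η Y ((F.map g).1 z) = g.1 (γm F η X z) :=
  ConcreteCategory.congr_hom (η.hom.naturality g) z

lemma γ_inj {X : Asm P} {z z' : (F.obj X).carrier} (h : γm F η X z = γm F η X z') :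
    z = z' := by
  rw [← σγ F η X z, ← σγ F η X z', h]

/- ### The comparison morphism for subassemblies (equalizers) -/

variable (hPFL : PreservesFiniteLimits F)

lemma Fχτ_eq (Z : Asm P) (S : Set Z.carrier) (z : (F.obj Z).carrier)
    (hz : γm F η Z z ∈ S) : (F.map (chiS Z S)).1 z = (F.map (tauS Z)).1 z := by
  apply γ_inj F η
  have h1 : γm F η (nablaObj P Prop) ((F.map (chiS Z S)).1 z) = (γm F η Z z ∈ S) :=
    gam_nat F η (chiS Z S) z
  have h2 : γm F η (nablaObj P Prop) ((F.map (tauS Z)).1 z) = True :=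
    gam_nat F η (tauS Z) z
  rw [h1, h2]
  exact eq_true hz

/-- The comparison morphism from the canonical subassembly of `F Z` to `F` of the
subassembly. -/
noncomputable def subCompInv (Z : Asm P) (S : Set Z.carrier) :
    subAsm Q (F.obj Z) {z | γm F η Z z ∈ S} ⟶ F.obj (subAsm P Z S) := by
  haveI : PreservesLimitsOfShape WalkingParallelPair F := hPFL.preservesFiniteLimits _
  exact (Fork.IsLimit.lift'
    (isLimitForkMapOfIsLimit F (subFork_cond Z S) (subForkIsLimit Z S))
    (subIncl (F.obj Z) {z | γm F η Z z ∈ S})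
    (hom_ext' (funext fun z => Fχτ_eq F η Z S z.1 z.2))).1

lemma subCompInv_fac (Z : Asm P) (S : Set Z.carrier) :
    subCompInv F η hPFL Z S ≫ F.map (subIncl Z S) =
      subIncl (F.obj Z) {z | γm F η Z z ∈ S} := by
  haveI : PreservesLimitsOfShape WalkingParallelPair F := hPFL.preservesFiniteLimits _
  exact (Fork.IsLimit.lift'
    (isLimitForkMapOfIsLimit F (subFork_cond Z S) (subForkIsLimit Z S))
    (subIncl (F.obj Z) {z | γm F η Z z ∈ S})
    (hom_ext' (funext fun z => Fχτ_eq F η Z S z.1 z.2))).2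

lemma subCompInv_point (Z : Asm P) (S : Set Z.carrier)
    (z : (F.obj Z).carrier) (hz : γm F η Z z ∈ S) :
    (F.map (subIncl Z S)).1 ((subCompInv F η hPFL Z S).1 ⟨z, hz⟩) = z :=
  congrFun (congrArg Subtype.val (subCompInv_fac F η hPFL Z S)) ⟨z, hz⟩

lemma subCompInv_gamma (Z : Asm P) (S : Set Z.carrier)
    (z : (F.obj Z).carrier) (hz : γm F η Z z ∈ S) :
    (γm F η (subAsm P Z S) ((subCompInv F η hPFL Z S).1 ⟨z, hz⟩)).1 = γm F η Z z := by
  have h := gam_nat F η (subIncl Z S) ((subCompInv F η hPFL Z S).1 ⟨z, hz⟩)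
  rw [subCompInv_point F η hPFL Z S z hz] at h
  exact h.symm

/- ### The comparison morphism for products -/

/-- The inverse comparison morphism for binary products. -/
noncomputable def prodCompInv (X Y : Asm P) :
    prodAsm Q (F.obj X) (F.obj Y) ⟶ F.obj (prodAsm P X Y) := by
  haveI : PreservesLimitsOfShape (Discrete WalkingPair) F := hPFL.preservesFiniteLimits _
  exact (mapIsLimitOfPreservesOfIsLimit F (prodFst X Y) (prodSnd X Y)
    (prodFanIsLimit X Y)).lift (prodFan (F.obj X) (F.obj Y))

lemma prodCompInv_fst (X Y : Asm P) :
    prodCompInv F hPFL X Y ≫ F.map (prodFst X Y) = prodFst (F.obj X) (F.obj Y) := by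
  haveI : PreservesLimitsOfShape (Discrete WalkingPair) F := hPFL.preservesFiniteLimits _
  exact (mapIsLimitOfPreservesOfIsLimit F (prodFst X Y) (prodSnd X Y)
    (prodFanIsLimit X Y)).fac (prodFan (F.obj X) (F.obj Y)) ⟨WalkingPair.left⟩

lemma prodCompInv_snd (X Y : Asm P) :
    prodCompInv F hPFL X Y ≫ F.map (prodSnd X Y) = prodSnd (F.obj X) (F.obj Y) := by
  haveI : PreservesLimitsOfShape (Discrete WalkingPair) F := hPFL.preservesFiniteLimits _
  exact (mapIsLimitOfPreservesOfIsLimit F (prodFst X Y) (prodSnd X Y)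
    (prodFanIsLimit X Y)).fac (prodFan (F.obj X) (F.obj Y)) ⟨WalkingPair.right⟩

lemma prodCompInv_gamma (X Y : Asm P) (z1 : (F.obj X).carrier) (z2 : (F.obj Y).carrier) :
    γm F η (prodAsm P X Y) ((prodCompInv F hPFL X Y).1 (z1, z2)) =
      (γm F η X z1, γm F η Y z2) := by
  refine Prod.ext ?_ ?_
  · have h1 : (F.map (prodFst X Y)).1 ((prodCompInv F hPFL X Y).1 (z1, z2)) = z1 :=
      congrFun (congrArg Subtype.val (prodCompInv_fst F hPFL X Y)) (z1, z2)
    have h2 := gam_nat F η (prodFst X Y) ((prodCompInv F hPFL X Y).1 (z1, z2))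
    rw [h1] at h2
    exact h2.symm
  · have h1 : (F.map (prodSnd X Y)).1 ((prodCompInv F hPFL X Y).1 (z1, z2)) = z2 :=
      congrFun (congrArg Subtype.val (prodCompInv_snd F hPFL X Y)) (z1, z2)
    have h2 := gam_nat F η (prodSnd X Y) ((prodCompInv F hPFL X Y).1 (z1, z2))
    rw [h1] at h2
    exact h2.symm

end Backward
section Backward2

open Limits

variable {A B : Type} {P : PCA A} {Q : PCA B}

/-- Constant-to-`V` trackers. -/
lemma exists_const_tracker (R : PCA A) {V : Set A} (hV : V ∈ R.filt) :
    ∃ W ∈ R.filt, ∀ w ∈ W, ∃ v ∈ V, ∀ x : A, R.app w x = some v := by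
  refine ⟨SubApp R.app (kSet R) V, ?_, ?_⟩
  · refine R.isFilter.appClosed _ (kSet_mem R) _ hV ?_
    intro k hk v hv
    obtain ⟨d, hd, -⟩ := kSet_app R k hk v
    rw [hd]; rfl
  · rintro w ⟨k, hk, v, hv, hkv⟩
    obtain ⟨d, hd, hdy⟩ := kSet_app R k hk v
    rw [hd] at hkv
    injection hkv with h
    subst h
    exact ⟨v, hv, fun x => hdy x⟩

variable (F : Asm P ⥤ Asm Q) (η : F ⋙ Gam Q ≅ Gam P)

/-- The applicative relation induced by a functor with a `Γ`-isomorphism. -/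
def fRel : A → B → Prop := fun a b => (F.obj (Astar P)).E (σm F η (Astar P) a) b

lemma fRel_total : ∀ a, ∃ b, fRel F η a b := fun a => (F.obj (Astar P)).total _

/-- The partial evaluation morphism on the subassembly of defined pairs. -/
def evMor (P : PCA A) :
    subAsm P (prodAsm P (Astar P) (Astar P)) {p | (P.app p.1 p.2).isSome} ⟶ Astar P := by
  refine ⟨fun p => (P.app p.1.1 p.1.2).get p.2, ?_⟩
  obtain ⟨W, hW, hspec⟩ := exists_tracker_gen P 2 0
    (.op (.op (.var 2) (.var 0)) (.op (.var 2) (.var 1))) ![kSet P, kSet' P]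
    (by intro i; fin_cases i; exacts [kSet_mem P, kSet'_mem P])
  refine ⟨W, hW, fun p c w hp hw => ?_⟩
  obtain ⟨a, b, ha, hb, hab⟩ := hp
  subst ha; subst hb
  obtain ⟨u, hu, hkey⟩ := hspec w hw
  have hk : u 0 ∈ kSet P := by simpa using hu 0
  have hk' : u 1 ∈ kSet' P := by simpa using hu 1
  have hfst : P.app c (u 0) = some p.1.1 := pairCode_fst hab (u 0) hk
  have hsnd : P.app c (u 1) = some p.1.2 := pairCode_snd hab (u 1) hk'
  obtain ⟨v, hv⟩ : ∃ v, P.app p.1.1 p.1.2 = some v := Option.isSome_iff_exists.mp p.2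
  have := hkey ![u 0, u 1, c] (by intro i; fin_cases i <;> rfl) v (by
    simp only [Term.eval, Option.bind_some]
    show ((P.app c (u 0)).bind fun s => (P.app c (u 1)).bind fun y => P.app s y) = some v
    erw [hfst, Option.bind_some, hsnd, Option.bind_some]
    exact hv)
  refine ⟨v, this, ?_⟩
  show v = (P.app p.1.1 p.1.2).get p.2
  have hg : (P.app p.1.1 p.1.2).get p.2 = v := by simp [hv]
  exact hg.symm

lemma fRel_tracked (hPFL : PreservesFiniteLimits F) :
    ∃ T ∈ Q.filt, Tracks₂ P.app Q.app T (fRel F η) := by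
  obtain ⟨Tev, hTev, hev⟩ := (F.map (evMor P)).2
  obtain ⟨TE, hTE, hE⟩ :=
    (subCompInv F η hPFL (prodAsm P (Astar P) (Astar P)) {p | (P.app p.1 p.2).isSome}).2
  obtain ⟨TP, hTP, hP⟩ := (prodCompInv F hPFL (Astar P) (Astar P)).2
  obtain ⟨W, hW, hspec⟩ := exists_tracker_gen Q 4 1
    (.op (.var 0) (.op (.var 1) (.op (.var 2) (.op (.op (.var 3) (.var 4)) (.var 5)))))
    ![Tev, TE, TP, prSet Q]
    (by intro i; fin_cases i; exacts [hTev, hTE, hTP, prSet_mem Q])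
  refine ⟨W, hW, ?_⟩
  intro a a' c hc b b' hfb hfb' w hw
  obtain ⟨u, hu, hkey⟩ := hspec w hw
  have hu0 : u 0 ∈ Tev := by simpa using hu 0
  have hu1 : u 1 ∈ TE := by simpa using hu 1
  have hu2 : u 2 ∈ TP := by simpa using hu 2
  have hu3 : u 3 ∈ prSet Q := by simpa using hu 3
  set As := Astar P
  set z1 := σm F η As a
  set z2 := σm F η As a'
  obtain ⟨c₀, hc₀, -⟩ := prSet_app Q (u 3) hu3 b b'
  have hE0 : (prodAsm Q (F.obj As) (F.obj As)).E (z1, z2) c₀ :=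
    ⟨b, b', hfb, hfb', u 3, hu3, hc₀⟩
  obtain ⟨c₁, hc₁, hE1⟩ := hP (z1, z2) c₀ (u 2) hE0 hu2
  have hmem : γm F η (prodAsm P As As) ((prodCompInv F hPFL As As).1 (z1, z2)) ∈
      {p : (prodAsm P As As).carrier | (P.app p.1 p.2).isSome} := by
    rw [prodCompInv_gamma F η hPFL As As z1 z2]
    show (P.app (γm F η As z1) (γm F η As z2)).isSome
    erw [γσ, γσ, hc]
    rfl
  obtain ⟨c₂, hc₂, hE2⟩ := hE ⟨_, hmem⟩ c₁ (u 1) hE1 hu1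
  obtain ⟨c₃, hc₃, hE3⟩ := hev _ c₂ (u 0) hE2 hu0
  have hid : (F.map (evMor P)).1
      ((subCompInv F η hPFL (prodAsm P As As) {p | (P.app p.1 p.2).isSome}).1 ⟨_, hmem⟩) =
      σm F η As c := by
    apply γ_inj F η
    have h1 := gam_nat F η (evMor P)
      ((subCompInv F η hPFL (prodAsm P As As) {p | (P.app p.1 p.2).isSome}).1 ⟨_, hmem⟩)
    rw [h1]
    have h2 : (γm F η (subAsm P (prodAsm P As As) {p | (P.app p.1 p.2).isSome})
        ((subCompInv F η hPFL (prodAsm P As As) {p | (P.app p.1 p.2).isSome}).1 ⟨_, hmem⟩)).1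
        = γm F η (prodAsm P As As) ((prodCompInv F hPFL As As).1 (z1, z2)) :=
      subCompInv_gamma F η hPFL (prodAsm P As As) _ _ hmem
    have h3 : γm F η (prodAsm P As As) ((prodCompInv F hPFL As As).1 (z1, z2)) = (a, a') := by
      erw [prodCompInv_gamma F η hPFL As As z1 z2, γσ, γσ]
      rfl
    erw [γσ]
    set gp := γm F η (subAsm P (prodAsm P As As) {p | (P.app p.1 p.2).isSome})
        ((subCompInv F η hPFL (prodAsm P As As) {p | (P.app p.1 p.2).isSome}).1 ⟨_, hmem⟩)
    show (P.app gp.1.1 gp.1.2).get gp.2 = c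
    have h4 : gp.1 = (a, a') := by rw [h2, h3]
    have h5 : P.app gp.1.1 gp.1.2 = some c := by rw [h4]; exact hc
    simp [h5]
  rw [hid] at hE3
  have happ := hkey ![u 0, u 1, u 2, u 3, b, b'] (by intro i; fin_cases i <;> rfl) c₃ (by
    simp only [Term.eval, Option.bind_some]
    show (((((Q.app (u 3) b).bind fun s => Q.app s b').bind fun y => Q.app (u 2) y).bind
      fun y => Q.app (u 1) y).bind fun y => Q.app (u 0) y) = some c₃
    rw [hc₀, Option.bind_some, hc₁, Option.bind_some, hc₂, Option.bind_some]
    exact hc₃)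
  have happ' : (Q.app w b).bind (fun s => Q.app s b') = some c₃ := happ
  obtain ⟨d, hd, hd'⟩ := Option.bind_eq_some_iff.mp happ'
  exact ⟨d, c₃, hd, hd', hE3⟩

lemma fRel_image (θ : Nab P ⋙ F ≅ Nab Q)
    (hepi : ∀ (X Y : Asm P) (e : X ⟶ Y), Nonempty (RegularEpi e) →
      Nonempty (RegularEpi (F.map e))) :
    ∀ V ∈ P.filt, relImage (fRel F η) V ∈ Q.filt := by
  intro V hV
  set AV := subAsm P (Astar P) V with hAV
  obtain ⟨v₀, hv₀⟩ := P.isFilter.nonempty V hV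
  let CV : Asm P := ⟨PUnit, fun _ b => b ∈ V, fun _ => ⟨v₀, hv₀⟩⟩
  let qV : AV ⟶ CV := ⟨fun _ => PUnit.unit,
    tracks_id_like _ fun x c hc => (hc : c = x.1) ▸ x.2⟩
  have hsurj : Function.Surjective qV.1 := fun y => ⟨⟨v₀, hv₀⟩, rfl⟩
  have hdesc : Descent qV :=
    ⟨iSet P, iSet_mem P, fun y b hb r hr =>
      ⟨b, iSet_app P r hr b, ⟨b, hb⟩, rfl, rfl⟩⟩
  obtain ⟨req⟩ := hepi _ _ qV (nonempty_regularEpi_of_descent qV hsurj hdesc)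
  obtain ⟨-, Uq, hUq, hqdes⟩ := descent_of_regularEpi (F.map qV) req
  obtain ⟨Wc, hWc, hWcs⟩ := exists_const_tracker P hV
  let cmor : nablaObj P PUnit ⟶ CV := ⟨fun _ => PUnit.unit, Wc, hWc, fun x a r hx hr => by
    obtain ⟨v, hvV, hconst⟩ := hWcs r hr
    exact ⟨v, hconst a, hvV⟩⟩
  let nV : nablaObj Q PUnit ⟶ F.obj CV := (θ.app PUnit).inv ≫ F.map cmor
  obtain ⟨TV, hTV, hnV⟩ := nV.2
  obtain ⟨Tι, hTι, hFι⟩ := (F.map (subIncl (Astar P) V)).2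
  have hS1def : SubDef Q.app TV Set.univ := by
    intro r hr b _
    obtain ⟨b', hb', -⟩ := hnV PUnit.unit b r trivial hr
    rw [hb']; rfl
  have hS1 : SubApp Q.app TV Set.univ ∈ Q.filt :=
    Q.isFilter.appClosed _ hTV _ (univ_mem_filt Q) hS1def
  have hS1spec : ∀ c ∈ SubApp Q.app TV Set.univ, (F.obj CV).E (nV.1 PUnit.unit) c := by
    rintro c ⟨r, hr, b, -, hrb⟩
    obtain ⟨b', hb', hEb'⟩ := hnV PUnit.unit b r trivial hr
    rw [hrb] at hb'
    injection hb' with h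
    subst h
    exact hEb'
  have hS2def : SubDef Q.app Uq (SubApp Q.app TV Set.univ) := by
    intro r hr c hc
    obtain ⟨c', hc', -⟩ := hqdes (nV.1 PUnit.unit) c (hS1spec c hc) r hr
    rw [hc']; rfl
  have hS2 : SubApp Q.app Uq (SubApp Q.app TV Set.univ) ∈ Q.filt :=
    Q.isFilter.appClosed _ hUq _ hS1 hS2def
  have hS2spec : ∀ c' ∈ SubApp Q.app Uq (SubApp Q.app TV Set.univ),
      ∃ x, (F.obj AV).E x c' := by
    rintro c' ⟨r, hr, c, hc, hrc⟩
    obtain ⟨c'', hc'', x, -, hEx⟩ := hqdes (nV.1 PUnit.unit) c (hS1spec c hc) r hr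
    rw [hrc] at hc''
    injection hc'' with h
    subst h
    exact ⟨x, hEx⟩
  have hS3def : SubDef Q.app Tι (SubApp Q.app Uq (SubApp Q.app TV Set.univ)) := by
    intro r hr c' hc'
    obtain ⟨x, hEx⟩ := hS2spec c' hc'
    obtain ⟨d, hd, -⟩ := hFι x c' r hEx hr
    rw [hd]; rfl
  have hS3 : SubApp Q.app Tι (SubApp Q.app Uq (SubApp Q.app TV Set.univ)) ∈ Q.filt :=
    Q.isFilter.appClosed _ hTι _ hS2 hS3def
  refine Q.isFilter.upward _ hS3 _ ?_
  rintro d ⟨r, hr, c', hc', hrc'⟩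
  obtain ⟨x, hEx⟩ := hS2spec c' hc'
  obtain ⟨d', hd', hEd'⟩ := hFι x c' r hEx hr
  rw [hrc'] at hd'
  injection hd' with h
  subst h
  refine ⟨(γm F η AV x).1, (γm F η AV x).2, ?_⟩
  show (F.obj (Astar P)).E (σm F η (Astar P) (γm F η AV x).1) d
  have hi : (F.map (subIncl (Astar P) V)).1 x = σm F η (Astar P) (γm F η AV x).1 := by
    have h1 := gam_nat F η (subIncl (Astar P) V) x
    have h2 := σγ F η (Astar P) ((F.map (subIncl (Astar P) V)).1 x)
    rw [← h2, h1]
    rfl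
  rw [← hi]
  exact hEd'

end Backward2
section Backward3

open Limits

variable {A B : Type} {P : PCA A} {Q : PCA B}
variable (F : Asm P ⥤ Asm Q) (η : F ⋙ Gam Q ≅ Gam P)

/-- The canonical "realizer-graph" assembly over `X`. -/
def graphAsm (X : Asm P) : Asm P :=
  subAsm P (prodAsm P (nablaObj P X.carrier) (Astar P)) {p | X.E p.1 p.2}

/-- First projection from the graph assembly. -/
def graphPi (X : Asm P) : graphAsm X ⟶ X := by
  refine ⟨fun p => p.1.1, ?_⟩
  obtain ⟨W, hW, hspec⟩ := exists_tracker_gen P 1 0 (.op (.var 1) (.var 0)) ![kSet' P]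
    (by intro i; fin_cases i; exact kSet'_mem P)
  refine ⟨W, hW, fun p c w hp hw => ?_⟩
  obtain ⟨e0, b0, -, hb0, pc⟩ := hp
  subst hb0
  obtain ⟨u, hu, hkey⟩ := hspec w hw
  have hk' : u 0 ∈ kSet' P := by simpa using hu 0
  have happ : P.app c (u 0) = some p.1.2 := pairCode_snd pc (u 0) hk'
  have := hkey ![u 0, c] (by intro i; fin_cases i <;> rfl) p.1.2 (by
    simp only [Term.eval, Option.bind_some]
    exact happ)
  exact ⟨p.1.2, this, p.2⟩

/-- Second projection from the graph assembly, to `A*`. -/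
def graphRho (X : Asm P) : graphAsm X ⟶ Astar P := by
  refine ⟨fun p => p.1.2, ?_⟩
  obtain ⟨W, hW, hspec⟩ := exists_tracker_gen P 1 0 (.op (.var 1) (.var 0)) ![kSet' P]
    (by intro i; fin_cases i; exact kSet'_mem P)
  refine ⟨W, hW, fun p c w hp hw => ?_⟩
  obtain ⟨e0, b0, -, hb0, pc⟩ := hp
  subst hb0
  obtain ⟨u, hu, hkey⟩ := hspec w hw
  have hk' : u 0 ∈ kSet' P := by simpa using hu 0
  have happ : P.app c (u 0) = some p.1.2 := pairCode_snd pc (u 0) hk'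
  have := hkey ![u 0, c] (by intro i; fin_cases i <;> rfl) p.1.2 (by
    simp only [Term.eval, Option.bind_some]
    exact happ)
  exact ⟨p.1.2, this, rfl⟩

lemma graphPi_surj (X : Asm P) : Function.Surjective (graphPi X).1 := by
  intro x
  obtain ⟨a, ha⟩ := X.total x
  exact ⟨⟨(x, a), ha⟩, rfl⟩

lemma graphPi_descent (X : Asm P) : Descent (graphPi X) := by
  obtain ⟨W, hW, hspec⟩ := exists_tracker_gen P 1 0
    (.op (.op (.var 0) (.var 1)) (.var 1)) ![prSet P]
    (by intro i; fin_cases i; exact prSet_mem P)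
  refine ⟨W, hW, fun x b hb w hw => ?_⟩
  obtain ⟨u, hu, hkey⟩ := hspec w hw
  have hp : u 0 ∈ prSet P := by simpa using hu 0
  obtain ⟨c₀, hc₀, -⟩ := prSet_app P (u 0) hp b b
  refine ⟨c₀, hkey ![u 0, b] (by intro i; fin_cases i <;> rfl) c₀ (by
    simp only [Term.eval, Option.bind_some]
    exact hc₀), ⟨(x, b), hb⟩, rfl, ?_⟩
  exact ⟨b, b, trivial, rfl, u 0, hp, hc₀⟩

section withAll

variable (hPFL : PreservesFiniteLimits F) (θ : Nab P ⋙ F ≅ Nab Q)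
variable (hepi : ∀ (X Y : Asm P) (e : X ⟶ Y), Nonempty (RegularEpi e) →
  Nonempty (RegularEpi (F.map e)))

/-- The applicative morphism structure on `fRel`. -/
noncomputable def backAppMor : IsAppMor P.app P.filt Q.app Q.filt (fRel F η) :=
  ⟨fRel_total F η, fRel_tracked F η hPFL, fRel_image F η θ hepi⟩

/-- The forward component of the natural isomorphism. -/
noncomputable def homComp (X : Asm P) :
    F.obj X ⟶ (asmFunctor (backAppMor F η hPFL θ hepi)).obj X := by
  refine ⟨γm F η X, ?_⟩
  obtain ⟨req⟩ := hepi _ _ (graphPi X)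
    (nonempty_regularEpi_of_descent (graphPi X) (graphPi_surj X) (graphPi_descent X))
  obtain ⟨-, Uπ, hUπ, hπdes⟩ := descent_of_regularEpi (F.map (graphPi X)) req
  obtain ⟨Tρ, hTρ, hρ⟩ := (F.map (graphRho X)).2
  obtain ⟨W, hW, hspec⟩ := exists_tracker_gen Q 2 0
    (.op (.var 0) (.op (.var 1) (.var 2))) ![Tρ, Uπ]
    (by intro i; fin_cases i; exacts [hTρ, hUπ])
  refine ⟨W, hW, fun z b w hz hw => ?_⟩
  obtain ⟨u, hu, hkey⟩ := hspec w hw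
  have hu0 : u 0 ∈ Tρ := by simpa using hu 0
  have hu1 : u 1 ∈ Uπ := by simpa using hu 1
  obtain ⟨c, hc, x, hqx, hEx⟩ := hπdes z b hz (u 1) hu1
  obtain ⟨d, hd, hEd⟩ := hρ x c (u 0) hEx hu0
  set gp := γm F η (graphAsm X) x with hgp
  have hid : (F.map (graphRho X)).1 x = σm F η (Astar P) gp.1.2 := by
    have h1 := gam_nat F η (graphRho X) x
    have h2 := σγ F η (Astar P) ((F.map (graphRho X)).1 x)
    rw [← h2, h1]
    rfl
  have hγz : γm F η X z = gp.1.1 := by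
    rw [← hqx]
    exact gam_nat F η (graphPi X) x
  refine ⟨d, hkey ![u 0, u 1, b] (by intro i; fin_cases i <;> rfl) d (by
    simp only [Term.eval, Option.bind_some]
    show ((Q.app (u 1) b).bind fun y => Q.app (u 0) y) = some d
    rw [hc, Option.bind_some]
    exact hd), gp.1.2, ?_, ?_⟩
  · rw [hγz]
    exact gp.2
  · show (F.obj (Astar P)).E (σm F η (Astar P) gp.1.2) d
    rw [← hid]
    exact hEd

/-- The backward component of the natural isomorphism. -/
noncomputable def invComp (X : Asm P) :
    (asmFunctor (backAppMor F η hPFL θ hepi)).obj X ⟶ F.obj X := by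
  refine ⟨σm F η X, ?_⟩
  obtain ⟨Tπ, hTπ, hπ⟩ := (F.map (graphPi X)).2
  obtain ⟨TE, hTE, hE⟩ := (subCompInv F η hPFL
    (prodAsm P (nablaObj P X.carrier) (Astar P)) {p | X.E p.1 p.2}).2
  obtain ⟨TP, hTP, hP⟩ := (prodCompInv F hPFL (nablaObj P X.carrier) (Astar P)).2
  obtain ⟨TN, hTN, hN⟩ := ((θ.app X.carrier).inv).2
  obtain ⟨W, hW, hspec⟩ := exists_tracker_gen Q 6 0
    (.op (.var 0) (.op (.var 1) (.op (.var 2)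
      (.op (.op (.var 3) (.op (.var 4) (.var 5))) (.var 6)))))
    ![Tπ, TE, TP, prSet Q, TN, Set.univ]
    (by intro i; fin_cases i;
        exacts [hTπ, hTE, hTP, prSet_mem Q, hTN, univ_mem_filt Q])
  refine ⟨W, hW, fun x b w hxb hw => ?_⟩
  obtain ⟨a, hXa, hfab⟩ := hxb
  obtain ⟨u, hu, hkey⟩ := hspec w hw
  have hu0 : u 0 ∈ Tπ := by simpa using hu 0
  have hu1 : u 1 ∈ TE := by simpa using hu 1
  have hu2 : u 2 ∈ TP := by simpa using hu 2
  have hu3 : u 3 ∈ prSet Q := by simpa using hu 3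
  have hu4 : u 4 ∈ TN := by simpa using hu 4
  set Nx := nablaObj P X.carrier
  set z1 := σm F η Nx x
  set z2 := σm F η (Astar P) a
  -- realizer for z1 in F ∇X via θ
  obtain ⟨e, he, hEe⟩ := hN ((θ.app X.carrier).hom.1 z1) (u 5) (u 4) trivial hu4
  have hz1 : ((θ.app X.carrier).inv).1 (((θ.app X.carrier).hom).1 z1) = z1 :=
    congrFun (congrArg Subtype.val (θ.app X.carrier).hom_inv_id) z1
  rw [hz1] at hEe
  -- pair realizer
  obtain ⟨c₀, hc₀, -⟩ := prSet_app Q (u 3) hu3 e b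
  have hE0 : (prodAsm Q (F.obj Nx) (F.obj (Astar P))).E (z1, z2) c₀ :=
    ⟨e, b, hEe, hfab, u 3, hu3, hc₀⟩
  obtain ⟨c₁, hc₁, hE1⟩ := hP (z1, z2) c₀ (u 2) hE0 hu2
  have hmem : γm F η (prodAsm P Nx (Astar P)) ((prodCompInv F hPFL Nx (Astar P)).1 (z1, z2)) ∈
      {p : (prodAsm P Nx (Astar P)).carrier | X.E p.1 p.2} := by
    rw [prodCompInv_gamma F η hPFL Nx (Astar P) z1 z2]
    show X.E (γm F η Nx z1) (γm F η (Astar P) z2)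
    erw [γσ, γσ]
    exact hXa
  obtain ⟨c₂, hc₂, hE2⟩ := hE ⟨_, hmem⟩ c₁ (u 1) hE1 hu1
  obtain ⟨c₃, hc₃, hE3⟩ := hπ _ c₂ (u 0) hE2 hu0
  have hid : (F.map (graphPi X)).1
      ((subCompInv F η hPFL (prodAsm P Nx (Astar P)) {p | X.E p.1 p.2}).1 ⟨_, hmem⟩) =
      σm F η X x := by
    apply γ_inj F η
    erw [γσ]
    have h1 := gam_nat F η (graphPi X)
      ((subCompInv F η hPFL (prodAsm P Nx (Astar P)) {p | X.E p.1 p.2}).1 ⟨_, hmem⟩)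
    rw [h1]
    have h2 : (γm F η (graphAsm X)
        ((subCompInv F η hPFL (prodAsm P Nx (Astar P)) {p | X.E p.1 p.2}).1 ⟨_, hmem⟩)).1
        = γm F η (prodAsm P Nx (Astar P)) ((prodCompInv F hPFL Nx (Astar P)).1 (z1, z2)) :=
      subCompInv_gamma F η hPFL (prodAsm P Nx (Astar P)) _ _ hmem
    have h3 : γm F η (prodAsm P Nx (Astar P)) ((prodCompInv F hPFL Nx (Astar P)).1 (z1, z2))
        = (x, a) := by
      erw [prodCompInv_gamma F η hPFL Nx (Astar P) z1 z2, γσ, γσ]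
      rfl
    show (γm F η (graphAsm X)
        ((subCompInv F η hPFL (prodAsm P Nx (Astar P)) {p | X.E p.1 p.2}).1 ⟨_, hmem⟩)).1.1 = x
    rw [h2, h3]
  rw [hid] at hE3
  refine ⟨c₃, hkey ![u 0, u 1, u 2, u 3, u 4, u 5, b]
    (by intro i; fin_cases i <;> rfl) c₃ (by
    simp only [Term.eval, Option.bind_some]
    show ((((((Q.app (u 4) (u 5)).bind fun y => Q.app (u 3) y).bind fun s => Q.app s b).bind
      fun y => Q.app (u 2) y).bind fun y => Q.app (u 1) y).bind fun y => Q.app (u 0) y)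
        = some c₃
    rw [he, Option.bind_some, hc₀, Option.bind_some, hc₁, Option.bind_some, hc₂,
      Option.bind_some]
    exact hc₃), hE3⟩

/-- The natural isomorphism `F ≅ Asm(f)`. -/
noncomputable def backIso : F ≅ asmFunctor (backAppMor F η hPFL θ hepi) := by
  refine NatIso.ofComponents (fun X =>
    ⟨homComp F η hPFL θ hepi X, invComp F η hPFL θ hepi X, ?_, ?_⟩) (fun g => ?_)
  · exact hom_ext' (funext fun z => σγ F η _ z)
  · exact hom_ext' (funext fun x => γσ F η _ x)
  · exact hom_ext' (funext fun z => gam_nat F η g z)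

end withAll

/-- Regular epis are stable under composition with isomorphisms. -/
lemma nonempty_regularEpi_comp {C : Type*} [Category C] {W X Y Z : C}
    (i : W ≅ X) (g : X ⟶ Y) (j : Y ≅ Z) (h : Nonempty (RegularEpi g)) :
    Nonempty (RegularEpi (i.hom ≫ g ≫ j.hom)) := by
  obtain ⟨re⟩ := h
  haveI : RegularEpi g := re
  haveI : Epi g := RegularEpi.epi g re
  have hcond : ∀ s : Cofork (re.left ≫ i.inv) (re.right ≫ i.inv),
      re.left ≫ (i.inv ≫ Cofork.π s) = re.right ≫ (i.inv ≫ Cofork.π s) := by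
    intro s
    have := s.condition
    simp only [Category.assoc] at this
    simp only [← Category.assoc] at this ⊢
    exact this
  have hw : (re.left ≫ i.inv) ≫ (i.hom ≫ g ≫ j.hom) =
      (re.right ≫ i.inv) ≫ (i.hom ≫ g ≫ j.hom) := by
    simp only [Category.assoc, Iso.inv_hom_id_assoc]
    rw [reassoc_of% re.w]
  refine ⟨⟨re.W, re.left ≫ i.inv, re.right ≫ i.inv, hw, ?_⟩⟩
  have hfac0 : ∀ s : Cofork (re.left ≫ i.inv) (re.right ≫ i.inv),
      g ≫ re.isColimit.desc (Cofork.ofπ (i.inv ≫ Cofork.π s) (hcond s))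
        = i.inv ≫ Cofork.π s :=
    fun s => re.isColimit.fac _ WalkingParallelPair.one
  refine Cofork.IsColimit.mk _
    (fun s => j.inv ≫ re.isColimit.desc (Cofork.ofπ (i.inv ≫ Cofork.π s) (hcond s)))
    (fun s => ?_) (fun s m hm => ?_)
  · show (i.hom ≫ g ≫ j.hom) ≫ j.inv ≫
      re.isColimit.desc (Cofork.ofπ (i.inv ≫ Cofork.π s) (hcond s)) = Cofork.π s
    simp only [Category.assoc, Iso.hom_inv_id_assoc]
    rw [hfac0 s]
    simp
  · have hm' : (i.hom ≫ g ≫ j.hom) ≫ m = Cofork.π s := hm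
    haveI : Epi (i.hom ≫ g ≫ j.hom) := by
      haveI : Epi (g ≫ j.hom) := epi_comp g j.hom
      exact epi_comp i.hom (g ≫ j.hom)
    apply (cancel_epi (i.hom ≫ g ≫ j.hom)).mp
    rw [hm']
    show Cofork.π s = (i.hom ≫ g ≫ j.hom) ≫ j.inv ≫
      re.isColimit.desc (Cofork.ofπ (i.inv ≫ Cofork.π s) (hcond s))
    simp only [Category.assoc, Iso.hom_inv_id_assoc]
    rw [hfac0 s]
    simp

end Backward3
/-- A functor `F : Asm(A,φ) ⥤ Asm(B,ψ)` is naturally isomorphic to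
`Asm(f)` for some applicative morphism `f` iff `F` is regular (preserves finite limits and
regular epimorphisms), `Γ_B ∘ F ≅ Γ_A` and `F ∘ ∇_A ≅ ∇_B`. -/
theorem statement10 (A B : Type) (P : PCA A) (Q : PCA B) (F : Asm P ⥤ Asm Q) :
    (∃ (f : A → B → Prop) (hf : IsAppMor P.app P.filt Q.app Q.filt f),
        Nonempty (F ≅ asmFunctor hf)) ↔
      (Nonempty (Limits.PreservesFiniteLimits F) ∧
       (∀ (X Y : Asm P) (e : X ⟶ Y), Nonempty (RegularEpi e) →
          Nonempty (RegularEpi (F.map e))) ∧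
       Nonempty (F ⋙ Gam Q ≅ Gam P) ∧
       Nonempty (Nab P ⋙ F ≅ Nab Q)) := by
  constructor
  · rintro ⟨f, hf, ⟨niso⟩⟩
    refine ⟨⟨?_⟩, ?_, ⟨Functor.isoWhiskerRight niso (Gam Q) ≪≫ gamIso hf⟩,
      ⟨Functor.isoWhiskerLeft (Nab P) niso ≪≫ nabIso hf⟩⟩
    · haveI := preservesFiniteLimits_asmFunctor hf
      exact Limits.preservesFiniteLimits_of_natIso niso.symm
    · intro X Y g hg
      obtain ⟨hsurj, hdesc⟩ := descent_of_regularEpi g hg.some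
      have h2 : Nonempty (RegularEpi ((asmFunctor hf).map g)) :=
        nonempty_regularEpi_of_descent ((asmFunctor hf).map g) hsurj
          (descent_asmFunctor hf g hdesc)
      have hnat : F.map g = (niso.app X).hom ≫ (asmFunctor hf).map g ≫ (niso.app Y).symm.hom := by
        simp only [Iso.app_hom, Iso.symm_hom, Iso.app_inv]
        rw [← Category.assoc, ← niso.hom.naturality g, Category.assoc,
          niso.hom_inv_id_app, Category.comp_id]
      rw [hnat]
      exact nonempty_regularEpi_comp (niso.app X) ((asmFunctor hf).map g) (niso.app Y).symm h2
  · rintro ⟨⟨hPFL⟩, hepi, ⟨η⟩, ⟨θ⟩⟩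
    exact ⟨fRel F η, backAppMor F η hPFL θ hepi, ⟨backIso F η hPFL θ hepi⟩⟩

end PcaPaper
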